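/- arXiv:2506.10838 — 9 statements merged into one kernel-verified Lean document; each statement's English description precedes it below -/
import Mathlib

section
/- Let f, g be coprime integer polynomials of positive degree and let d = gcd(L(f), L(g)) where L denotes the leading coefficient. Then there exist integer polynomials p, q with deg(p) < deg(g), deg(q) < deg(f), d dividing every coefficient of p and of q, and p·f + q·g = |Res(f,g)|. -/
open Polynomial

/-- The Sylvester matrix of two integer polynomials. -/
noncomputable def sylvesterMatrix (f g : Polynomial ℤ) :
    Matrix (Fin (g.natDegree + f.natDegree)) (Fin (g.natDegree + f.natDegree)) ℤ :=
  Matrix.of fun i j =>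
    if (i : ℕ) < g.natDegree then
      if (i : ℕ) ≤ (j : ℕ) ∧ (j : ℕ) ≤ (i : ℕ) + f.natDegree then
        f.coeff (f.natDegree + i - j)
      else 0
    else
      if (i : ℕ) - g.natDegree ≤ (j : ℕ) ∧ (j : ℕ) ≤ (i : ℕ) - g.natDegree + g.natDegree then
        g.coeff (g.natDegree + ((i : ℕ) - g.natDegree) - j)
      else 0

/-- The resultant of two integer polynomials, as the determinant of their Sylvester matrix. -/
noncomputable def res (f g : Polynomial ℤ) : ℤ := (sylvesterMatrix f g).det

private lemma aux_row (h : Polynomial ℤ) (N k : ℕ) (hk : k + h.natDegree < N) :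
    ∑ j ∈ Finset.range N,
      (if k ≤ j ∧ j ≤ k + h.natDegree then C (h.coeff (h.natDegree + k - j)) else 0) *
        X ^ (N - 1 - j)
      = X ^ (N - 1 - k - h.natDegree) * h := by
  set D := h.natDegree with hD
  have h1 : ∀ j, (if k ≤ j ∧ j ≤ k + D then C (h.coeff (D + k - j)) else 0) * X ^ (N - 1 - j)
      = if k ≤ j ∧ j ≤ k + D then C (h.coeff (D + k - j)) * X ^ (N - 1 - j) else 0 := by
    intro j; split <;> simp
  simp_rw [h1]
  rw [← Finset.sum_filter]
  have h2 : (Finset.range N).filter (fun j => k ≤ j ∧ j ≤ k + D) = Finset.Ico k (k + D + 1) := by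
    ext j
    simp only [Finset.mem_filter, Finset.mem_range, Finset.mem_Ico]
    omega
  rw [h2, Finset.sum_Ico_eq_sum_range]
  have h3 : k + D + 1 - k = D + 1 := by omega
  rw [h3]
  have step : ∀ t ∈ Finset.range (D + 1),
      C (h.coeff (D + k - (k + t))) * X ^ (N - 1 - (k + t))
      = (fun s => C (h.coeff s) * X ^ (N - 1 - k - D + s)) (D + 1 - 1 - t) := by
    intro t ht
    rw [Finset.mem_range] at ht
    simp only
    have e1 : D + k - (k + t) = D + 1 - 1 - t := by omega
    have e2 : N - 1 - (k + t) = N - 1 - k - D + (D + 1 - 1 - t) := by omega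
    rw [e1, e2]
  rw [Finset.sum_congr rfl step,
    Finset.sum_range_reflect (fun s => C (h.coeff s) * X ^ (N - 1 - k - D + s)) (D + 1)]
  conv_rhs => rw [h.as_sum_range_C_mul_X_pow, ← hD]
  rw [Finset.mul_sum]
  refine Finset.sum_congr rfl fun s _ => ?_
  rw [pow_add]; ring

open Matrix in
private lemma dvd_det_of_dvd_col {N : ℕ} (B : Matrix (Fin N) (Fin N) ℤ) (j0 : Fin N) (d : ℤ)
    (h : ∀ i, d ∣ B i j0) : d ∣ B.det := by
  choose c hc using h
  have hB : B = B.updateCol j0 (d • c) := by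
    ext i j
    rcases eq_or_ne j j0 with rfl | hj
    · simp [Matrix.updateCol_apply, hc i]
    · simp [Matrix.updateCol_apply, hj]
  rw [hB, Matrix.det_updateCol_smul]
  exact Dvd.intro _ rfl

open Matrix in
theorem statement_2 (f g : Polynomial ℤ)
    (hf : 0 < f.natDegree) (hg : 0 < g.natDegree)
    (hcop : IsCoprime (f.map (Int.castRingHom ℚ)) (g.map (Int.castRingHom ℚ))) :
    ∃ p q : Polynomial ℤ,
      p.degree < g.degree ∧ q.degree < f.degree ∧
      (∀ i : ℕ, (Int.gcd f.leadingCoeff g.leadingCoeff : ℤ) ∣ p.coeff i) ∧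
      (∀ i : ℕ, (Int.gcd f.leadingCoeff g.leadingCoeff : ℤ) ∣ q.coeff i) ∧
      p * f + q * g = Polynomial.C |res f g| := by
  classical
  have hg0 : g ≠ 0 := fun h0 => by simp [h0] at hg
  have hf0 : f ≠ 0 := fun h0 => by simp [h0] at hf
  set m := g.natDegree with hm
  set n := f.natDegree with hn
  set N := m + n with hN
  set A := sylvesterMatrix f g with hA
  set d : ℤ := (Int.gcd f.leadingCoeff g.leadingCoeff : ℤ) with hd
  set e : Fin N → ℤ := fun k => if (k : ℕ) = N - 1 then 1 else 0 with he
  set x : Fin N → ℤ := Aᵀ.cramer e with hx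
  -- divisibility of the cofactors
  have hdx : ∀ i, d ∣ x i := by
    intro i
    rw [hx, Matrix.cramer_transpose_apply]
    apply dvd_det_of_dvd_col _ (⟨0, by omega⟩ : Fin N)
    intro j
    rw [Matrix.updateRow_apply]
    split
    · simp only [he]
      rw [if_neg (show ¬(((⟨0, by omega⟩ : Fin N) : ℕ) = N - 1) by simp only [Fin.val_mk]; omega)]
      exact dvd_zero d
    · show d ∣ A j ⟨0, by omega⟩
      rw [hA]
      simp only [sylvesterMatrix, Matrix.of_apply, Fin.val_mk]
      by_cases h1 : (j : ℕ) < m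
      · rw [if_pos h1]
        by_cases h2 : (j : ℕ) = 0
        · rw [if_pos (by omega)]
          have h3 : f.natDegree + (j : ℕ) - 0 = f.natDegree := by omega
          rw [h3, hd]
          exact Int.gcd_dvd_left _ _
        · rw [if_neg (by omega)]
          exact dvd_zero d
      · rw [if_neg h1]
        by_cases h2 : (j : ℕ) = m
        · rw [if_pos (by omega)]
          have h3 : g.natDegree + ((j : ℕ) - g.natDegree) - 0 = g.natDegree := by omega
          rw [h3, hd]
          exact Int.gcd_dvd_right _ _
        · rw [if_neg (by omega)]
          exact dvd_zero d
  -- Cramer identity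
  have hcr : ∀ j : Fin N, ∑ i : Fin N, A i j * x i = A.det * e j := by
    intro j
    have h := congrFun (Matrix.mulVec_cramer Aᵀ e) j
    simp only [Matrix.mulVec, dotProduct, Matrix.transpose_apply, Matrix.det_transpose,
      Pi.smul_apply, smul_eq_mul] at h
    rw [hx]
    exact h
  -- row sums
  have hrow : ∀ i : Fin N, (∑ j : Fin N, C (A i j) * X ^ (N - 1 - (j : ℕ)))
      = if (i : ℕ) < m then X ^ (m - 1 - (i : ℕ)) * f
        else X ^ (n - 1 - ((i : ℕ) - m)) * g := by
    intro i
    by_cases hi : (i : ℕ) < m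
    · rw [if_pos hi]
      have hptw : ∀ j : Fin N, C (A i j) * X ^ (N - 1 - (j : ℕ)) =
          (if (i : ℕ) ≤ (j : ℕ) ∧ (j : ℕ) ≤ (i : ℕ) + f.natDegree then
            C (f.coeff (f.natDegree + (i : ℕ) - (j : ℕ))) else 0) * X ^ (N - 1 - (j : ℕ)) := by
        intro j
        rw [hA]
        simp only [sylvesterMatrix, Matrix.of_apply, ← hm, if_pos hi, apply_ite C, map_zero]
      rw [Finset.sum_congr rfl (fun j _ => hptw j),
        Fin.sum_univ_eq_sum_range (fun j => (if (i : ℕ) ≤ j ∧ j ≤ (i : ℕ) + f.natDegree then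
          C (f.coeff (f.natDegree + (i : ℕ) - j)) else 0) * X ^ (N - 1 - j)) N,
        aux_row f N (i : ℕ) (by omega)]
      congr 2
      omega
    · rw [if_neg hi]
      have hptw : ∀ j : Fin N, C (A i j) * X ^ (N - 1 - (j : ℕ)) =
          (if (i : ℕ) - m ≤ (j : ℕ) ∧ (j : ℕ) ≤ (i : ℕ) - m + g.natDegree then
            C (g.coeff (g.natDegree + ((i : ℕ) - m) - (j : ℕ))) else 0) * X ^ (N - 1 - (j : ℕ)) := by
        intro j
        rw [hA]
        simp only [sylvesterMatrix, Matrix.of_apply, ← hm, if_neg hi, apply_ite C, map_zero]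
      rw [Finset.sum_congr rfl (fun j _ => hptw j),
        Fin.sum_univ_eq_sum_range (fun j => (if (i : ℕ) - m ≤ j ∧ j ≤ (i : ℕ) - m + g.natDegree then
          C (g.coeff (g.natDegree + ((i : ℕ) - m) - j)) else 0) * X ^ (N - 1 - j)) N,
        aux_row g N ((i : ℕ) - m) (by omega)]
      congr 2
      omega
  -- key identity
  have key : ∑ i : Fin N, C (x i) * (∑ j : Fin N, C (A i j) * X ^ (N - 1 - (j : ℕ)))
      = C A.det := by
    simp_rw [Finset.mul_sum]
    rw [Finset.sum_comm]
    have hj : ∀ j : Fin N, ∑ i : Fin N, C (x i) * (C (A i j) * X ^ (N - 1 - (j : ℕ)))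
        = C (A.det * e j) * X ^ (N - 1 - (j : ℕ)) := by
      intro j
      rw [← hcr j, map_sum, Finset.sum_mul]
      refine Finset.sum_congr rfl fun i _ => ?_
      rw [C_mul]
      ring
    rw [Finset.sum_congr rfl (fun j _ => hj j)]
    rw [Finset.sum_eq_single (⟨N - 1, by omega⟩ : Fin N)]
    · simp [he]
    · intro b _ hb
      have hb' : (b : ℕ) ≠ N - 1 := by
        intro hc
        exact hb (Fin.ext (by simpa using hc))
      simp [he, hb']
    · intro habs
      exact absurd (Finset.mem_univ _) habs
  -- the cofactor polynomials
  set p : Polynomial ℤ := ∑ i : Fin N, if (i : ℕ) < m then C (x i) * X ^ (m - 1 - (i : ℕ)) else 0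
    with hp
  set q : Polynomial ℤ :=
      ∑ i : Fin N, if (i : ℕ) < m then 0 else C (x i) * X ^ (n - 1 - ((i : ℕ) - m)) with hq
  have hpq : p * f + q * g = C A.det := by
    rw [hp, hq, Finset.sum_mul, Finset.sum_mul, ← Finset.sum_add_distrib, ← key]
    refine Finset.sum_congr rfl fun i _ => ?_
    rw [hrow i]
    by_cases hi : (i : ℕ) < m
    · rw [if_pos hi, if_pos hi, if_pos hi]
      ring
    · rw [if_neg hi, if_neg hi, if_neg hi]
      ring
  have hdegp : p.degree < g.degree := by
    rw [degree_eq_natDegree hg0]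
    refine lt_of_le_of_lt (degree_sum_le _ _) ?_
    rw [Finset.sup_lt_iff (by exact WithBot.bot_lt_coe m)]
    intro i _
    by_cases hi : (i : ℕ) < m
    · rw [if_pos hi]
      refine lt_of_le_of_lt (degree_C_mul_X_pow_le _ _) ?_
      exact_mod_cast (by omega : m - 1 - (i : ℕ) < m)
    · rw [if_neg hi, degree_zero]
      exact WithBot.bot_lt_coe _
  have hdegq : q.degree < f.degree := by
    rw [degree_eq_natDegree hf0]
    refine lt_of_le_of_lt (degree_sum_le _ _) ?_
    rw [Finset.sup_lt_iff (by exact WithBot.bot_lt_coe n)]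
    intro i _
    by_cases hi : (i : ℕ) < m
    · rw [if_pos hi, degree_zero]
      exact WithBot.bot_lt_coe _
    · rw [if_neg hi]
      refine lt_of_le_of_lt (degree_C_mul_X_pow_le _ _) ?_
      exact_mod_cast (by omega : n - 1 - ((i : ℕ) - m) < n)
  have hcp : ∀ t : ℕ, d ∣ p.coeff t := by
    intro t
    rw [hp, Polynomial.finset_sum_coeff]
    apply Finset.dvd_sum
    intro i _
    by_cases hi : (i : ℕ) < m
    · rw [if_pos hi, coeff_C_mul]
      exact (hdx i).mul_right _
    · simp [if_neg hi]
  have hcq : ∀ t : ℕ, d ∣ q.coeff t := by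
    intro t
    rw [hq, Polynomial.finset_sum_coeff]
    apply Finset.dvd_sum
    intro i _
    by_cases hi : (i : ℕ) < m
    · simp [if_pos hi]
    · rw [if_neg hi, coeff_C_mul]
      exact (hdx i).mul_right _
  have hres : res f g = A.det := by rw [res, ← hA]
  rcases le_or_gt 0 A.det with hpos | hneg
  · refine ⟨p, q, hdegp, hdegq, hcp, hcq, ?_⟩
    rw [hpq, hres, abs_of_nonneg hpos]
  · refine ⟨-p, -q, ?_, ?_, ?_, ?_, ?_⟩
    · simpa using hdegp
    · simpa using hdegq
    · intro t; simpa using (hcp t).neg_right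
    · intro t; simpa using (hcq t).neg_right
    · rw [neg_mul, neg_mul, ← neg_add, hpq, ← map_neg C, hres, abs_of_neg hneg]
end

section
/- If f and g are coprime integer polynomials of positive degree and d = gcd(L(f), L(g)), then d divides the resultant Res(f,g). -/
open Polynomial

theorem statement_3 (f g : Polynomial ℤ)
    (hf : 0 < f.natDegree) (hg : 0 < g.natDegree)
    (hcop : IsCoprime (f.map (Int.castRingHom ℚ)) (g.map (Int.castRingHom ℚ))) :
    (Int.gcd f.leadingCoeff g.leadingCoeff : ℤ) ∣ res f g := by
  have hn : 0 < g.natDegree + f.natDegree := by omega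
  set d : ℤ := (Int.gcd f.leadingCoeff g.leadingCoeff : ℤ) with hd
  have hcol : ∀ i : Fin (g.natDegree + f.natDegree),
      d ∣ sylvesterMatrix f g i ⟨0, hn⟩ := by
    intro i
    simp only [sylvesterMatrix, Matrix.of_apply]
    split_ifs with h1 h2 h3
    · have hi0 : (i : ℕ) = 0 := by omega
      rw [hi0]
      simpa using (Int.gcd_dvd_left _ _ : d ∣ f.leadingCoeff)
    · exact dvd_zero _
    · have hi0 : (i : ℕ) = g.natDegree := by omega
      rw [hi0]
      simpa using (Int.gcd_dvd_right _ _ : d ∣ g.leadingCoeff)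
    · exact dvd_zero _
  unfold res
  rw [Matrix.det_apply]
  apply Finset.dvd_sum
  intro σ _
  rw [Units.smul_def, zsmul_eq_mul]
  apply Dvd.dvd.mul_left
  exact (hcol (σ ⟨0, hn⟩)).trans
    (Finset.dvd_prod_of_mem (fun i => sylvesterMatrix f g (σ i) i) (Finset.mem_univ (⟨0, hn⟩ : Fin (g.natDegree + f.natDegree))))
end

section
/- If f and g are coprime integer polynomials of positive degree, then r(f,g) divides B(f,g). -/
open Polynomial

/-- `B` is a positive common denominator for the (unique) Bezout cofactors `p, q` in `ℚ[x]`
with `deg p < deg g`, `deg q < deg f` and `p*f + q*g = 1`, i.e. `B*p, B*q` lie in `ℤ[x]`. -/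
def IsBezoutDenom (f g : Polynomial ℤ) (B : ℤ) : Prop :=
  0 < B ∧ ∃ p q : Polynomial ℚ,
    p.degree < (g.map (Int.castRingHom ℚ)).degree ∧
    q.degree < (f.map (Int.castRingHom ℚ)).degree ∧
    p * f.map (Int.castRingHom ℚ) + q * g.map (Int.castRingHom ℚ) = 1 ∧
    (∃ P : Polynomial ℤ, P.map (Int.castRingHom ℚ) = Polynomial.C (B : ℚ) * p) ∧
    (∃ Q : Polynomial ℤ, Q.map (Int.castRingHom ℚ) = Polynomial.C (B : ℚ) * q)

theorem statement_4 (f g : Polynomial ℤ)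
    (hf : 0 < f.natDegree) (hg : 0 < g.natDegree)
    (hcop : IsCoprime (f.map (Int.castRingHom ℚ)) (g.map (Int.castRingHom ℚ)))
    (r : ℤ) (hrpos : 0 < r)
    (hrmem : ∃ u v : Polynomial ℤ, u * f + v * g = Polynomial.C r)
    (hrmin : ∀ s : ℤ, 0 < s →
      (∃ u v : Polynomial ℤ, u * f + v * g = Polynomial.C s) → r ≤ s)
    (B : ℤ) (hB : IsBezoutDenom f g B)
    (hBmin : ∀ B' : ℤ, IsBezoutDenom f g B' → B ≤ B') :
    r ∣ B := by
  obtain ⟨hBpos, p, q, hdp, hdq, hbez, ⟨P, hP⟩, ⟨Q, hQ⟩⟩ := hB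
  -- P * f + Q * g = C B in ℤ[x]
  have hmapinj : Function.Injective (Polynomial.map (Int.castRingHom ℚ)) :=
    Polynomial.map_injective _ (fun a b h => by simpa using h)
  have hPQ : P * f + Q * g = Polynomial.C B := by
    apply hmapinj
    simp only [Polynomial.map_add, Polynomial.map_mul, hP, hQ, Polynomial.map_C]
    push_cast
    ring_nf
    calc Polynomial.C (B : ℚ) * p * f.map (Int.castRingHom ℚ)
          + Polynomial.C (B : ℚ) * q * g.map (Int.castRingHom ℚ)
        = Polynomial.C (B : ℚ) *
            (p * f.map (Int.castRingHom ℚ) + q * g.map (Int.castRingHom ℚ)) := by ring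
      _ = Polynomial.C (B : ℚ) := by rw [hbez, mul_one]
  obtain ⟨u, v, huv⟩ := hrmem
  -- B % r is in the set
  have hmem : ∃ u' v' : Polynomial ℤ, u' * f + v' * g = Polynomial.C (B % r) := by
    refine ⟨P - Polynomial.C (B / r) * u, Q - Polynomial.C (B / r) * v, ?_⟩
    have : B % r = B - B / r * r := by rw [Int.emod_def]; ring
    rw [this]
    have : Polynomial.C (B - B / r * r) =
        Polynomial.C B - Polynomial.C (B / r) * Polynomial.C r := by
      simp [Polynomial.C_mul]
    rw [this, ← hPQ, ← huv]
    ring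
  rcases eq_or_lt_of_le (Int.emod_nonneg B (ne_of_gt hrpos)) with h0 | h0
  · exact Int.dvd_of_emod_eq_zero h0.symm
  · have := hrmin _ h0 hmem
    have := Int.emod_lt_of_pos B hrpos
    omega
end

section
/- Let f and g be coprime integer polynomials of positive degree and let d = gcd(L(f), L(g)). Then there exists a non-negative integer k such that B(f,g) divides d^k · r(f,g). -/
open Polynomial

lemma pseudoDiv_aux (g : Polynomial ℤ) (hg : 0 < g.degree) :
    ∀ N : ℕ, ∀ u : Polynomial ℤ, u.natDegree ≤ N →
    ∃ (m : ℕ) (s t : Polynomial ℤ),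
      C (g.leadingCoeff ^ m) * u = g * s + t ∧ t.degree < g.degree := by
  intro N
  induction N with
  | zero =>
    intro u hu
    refine ⟨0, 0, u, by simp, ?_⟩
    calc u.degree ≤ (u.natDegree : WithBot ℕ) := degree_le_natDegree
    _ ≤ (0 : ℕ) := by exact_mod_cast hu
    _ < g.degree := hg
  | succ N ih =>
    intro u hu
    by_cases hud : u.degree < g.degree
    · exact ⟨0, 0, u, by simp, hud⟩
    push_neg at hud
    have hu0 : u ≠ 0 := by
      rintro rfl
      simp only [degree_zero] at hud
      exact absurd (lt_of_lt_of_le hg hud) (by simp)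
    have hg0 : g ≠ 0 := fun h => by simp [h] at hg
    set b := g.leadingCoeff with hb
    set c := u.leadingCoeff with hc
    have hbne : b ≠ 0 := leadingCoeff_ne_zero.mpr hg0
    have hcne : c ≠ 0 := leadingCoeff_ne_zero.mpr hu0
    have hgle : g.natDegree ≤ u.natDegree := natDegree_le_natDegree hud
    set e := u.natDegree - g.natDegree with he
    set u' : Polynomial ℤ := C b * u - C c * X ^ e * g with hu'
    have h1 : (C c * X ^ e * g) ≠ 0 :=
      mul_ne_zero (mul_ne_zero (C_ne_zero.mpr hcne) (pow_ne_zero e X_ne_zero)) hg0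
    have h2 : C b * u ≠ 0 := mul_ne_zero (C_ne_zero.mpr hbne) hu0
    have hdeq : (C b * u).degree = (C c * X ^ e * g).degree := by
      rw [degree_eq_natDegree h2, degree_eq_natDegree h1]
      congr 1
      rw [natDegree_mul (mul_ne_zero (C_ne_zero.mpr hcne) (pow_ne_zero e X_ne_zero)) hg0,
        natDegree_mul (C_ne_zero.mpr hcne) (pow_ne_zero e X_ne_zero),
        natDegree_mul (C_ne_zero.mpr hbne) hu0, natDegree_C, natDegree_C, natDegree_X_pow,
        zero_add, zero_add, he]
      omega
    have hlc : (C b * u).leadingCoeff = (C c * X ^ e * g).leadingCoeff := by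
      rw [leadingCoeff_mul, leadingCoeff_mul, leadingCoeff_mul, leadingCoeff_C, leadingCoeff_C,
        leadingCoeff_X_pow]; ring
    have hlt : u'.degree < u.degree := by
      have := degree_sub_lt hdeq h2 hlc
      rwa [degree_mul, degree_C hbne, zero_add] at this
    have hund : u'.natDegree ≤ N := by
      rcases eq_or_ne u' 0 with h | h
      · simp [h]
      · have := natDegree_lt_natDegree h hlt
        omega
    obtain ⟨m, s, t, heq, htd⟩ := ih u' hund
    refine ⟨m + 1, s + C (b ^ m * c) * X ^ e, t, ?_, htd⟩
    rw [hu'] at heq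
    simp only [pow_succ, C_mul, C_pow] at heq ⊢
    linear_combination heq

lemma pseudoDiv (g : Polynomial ℤ) (hg : 0 < g.degree) (u : Polynomial ℤ) :
    ∃ (m : ℕ) (s t : Polynomial ℤ),
      C (g.leadingCoeff ^ m) * u = g * s + t ∧ t.degree < g.degree :=
  pseudoDiv_aux g hg u.natDegree u le_rfl

lemma int_of_mul_intpoly (g : Polynomial ℤ) (hg : 0 < g.degree) (h : Polynomial ℚ)
    (W : Polynomial ℤ)
    (hW : W.map (Int.castRingHom ℚ) = h * g.map (Int.castRingHom ℚ)) :
    ∃ (j : ℕ) (S : Polynomial ℤ),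
      S.map (Int.castRingHom ℚ) = C ((g.leadingCoeff : ℚ) ^ j) * h := by
  obtain ⟨j, s, t, heq, htd⟩ := pseudoDiv g hg W
  set φ := Int.castRingHom ℚ
  have hinj : Function.Injective (φ : ℤ → ℚ) := Int.cast_injective
  set G := g.map φ with hGdef
  have hGdeg : G.degree = g.degree := degree_map_eq_of_injective hinj g
  have heq' : C ((g.leadingCoeff : ℚ) ^ j) * (h * G) = G * s.map φ + t.map φ := by
    have h2 := congrArg (Polynomial.map φ) heq
    rw [Polynomial.map_mul, Polynomial.map_add, Polynomial.map_mul, map_C, hW] at h2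
    convert h2 using 3
    simp [map_pow]
  have hkey : (C ((g.leadingCoeff : ℚ) ^ j) * h - s.map φ) * G = t.map φ := by
    linear_combination heq'
  have hzero : C ((g.leadingCoeff : ℚ) ^ j) * h - s.map φ = 0 := by
    by_contra hne
    have hd : (t.map φ).degree =
        (C ((g.leadingCoeff : ℚ) ^ j) * h - s.map φ).degree + G.degree := by
      rw [← hkey, degree_mul]
    have h3 : G.degree ≤ (t.map φ).degree := by
      rw [hd]
      exact le_add_of_nonneg_left (zero_le_degree_iff.mpr hne)
    have ht : (t.map φ).degree < G.degree := by
      rw [degree_map_eq_of_injective hinj, hGdeg]; exact htd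
    exact absurd (lt_of_le_of_lt h3 ht) (lt_irrefl _)
  exact ⟨j, s, (sub_eq_zero.mp hzero).symm⟩

lemma denom_lemma (f g : Polynomial ℤ) (hfd : 0 < f.degree) (hgd : 0 < g.degree)
    (hcop : IsCoprime (g.map (Int.castRingHom ℚ)) (f.map (Int.castRingHom ℚ)))
    (p q : Polynomial ℚ)
    (hpd : p.degree < (g.map (Int.castRingHom ℚ)).degree)
    (hpq : p * f.map (Int.castRingHom ℚ) + q * g.map (Int.castRingHom ℚ) = 1)
    (r : ℤ) (u v : Polynomial ℤ) (huv : u * f + v * g = C r) :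
    ∃ (M : ℕ) (T T' : Polynomial ℤ),
      T.map (Int.castRingHom ℚ) = C ((g.leadingCoeff ^ M * r : ℤ) : ℚ) * p ∧
      T'.map (Int.castRingHom ℚ) = C ((g.leadingCoeff ^ M * r : ℤ) : ℚ) * q := by
  set φ := Int.castRingHom ℚ with hφ
  have hinj : Function.Injective (φ : ℤ → ℚ) := Int.cast_injective
  set F := f.map φ with hF
  set G := g.map φ with hG
  have hGdeg : G.degree = g.degree := degree_map_eq_of_injective hinj g
  obtain ⟨m, s, t, heq, htd⟩ := pseudoDiv g hgd u
  set c : ℚ := (g.leadingCoeff : ℚ) ^ m * (r : ℚ) with hc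
  -- map the integer combination
  have hmapuv : u.map φ * F + v.map φ * G = C (r : ℚ) := by
    have h2 := congrArg (Polynomial.map φ) huv
    rwa [Polynomial.map_add, Polynomial.map_mul, Polynomial.map_mul, map_C] at h2
  have key : (C (r : ℚ) * p - u.map φ) * F = (v.map φ - C (r : ℚ) * q) * G := by
    linear_combination C (r : ℚ) * hpq - hmapuv
  have hdvd : G ∣ (C (r : ℚ) * p - u.map φ) := by
    refine hcop.dvd_of_dvd_mul_right ⟨v.map φ - C (r : ℚ) * q, ?_⟩
    rw [key]; ring
  obtain ⟨w, hw⟩ := hdvd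
  have heq' : C ((g.leadingCoeff : ℚ) ^ m) * u.map φ = G * s.map φ + t.map φ := by
    have h2 := congrArg (Polynomial.map φ) heq
    rw [Polynomial.map_mul, Polynomial.map_add, Polynomial.map_mul, map_C] at h2
    convert h2 using 3
    simp [map_pow]
  have hzero0 : C c * p - t.map φ = (s.map φ + C ((g.leadingCoeff : ℚ) ^ m) * w) * G := by
    have : C c = C ((g.leadingCoeff : ℚ) ^ m) * C ((r : ℚ)) := by rw [← C_mul, hc]
    rw [this]
    linear_combination C ((g.leadingCoeff : ℚ) ^ m) * hw + heq'
  have hdeglt : (C c * p - t.map φ).degree < G.degree := by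
    apply lt_of_le_of_lt (degree_sub_le _ _)
    apply max_lt
    · calc (C c * p).degree ≤ (C c).degree + p.degree := degree_mul_le _ _
      _ ≤ 0 + p.degree := add_le_add degree_C_le le_rfl
      _ = p.degree := zero_add _
      _ < G.degree := hpd
    · rw [degree_map_eq_of_injective hinj, hGdeg]; exact htd
  have hzero : s.map φ + C ((g.leadingCoeff : ℚ) ^ m) * w = 0 := by
    by_contra hne
    rw [hzero0, degree_mul] at hdeglt
    have h3 : G.degree ≤ (s.map φ + C ((g.leadingCoeff : ℚ) ^ m) * w).degree + G.degree :=
      le_add_of_nonneg_left (zero_le_degree_iff.mpr hne)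
    exact absurd (lt_of_le_of_lt h3 hdeglt) (lt_irrefl _)
  have hT : t.map φ = C c * p := by
    have := hzero0
    rw [hzero, zero_mul, sub_eq_zero] at this
    exact this.symm
  -- now handle q
  have hWmap : (C (g.leadingCoeff ^ m * r) - t * f).map φ = (C c * q) * G := by
    rw [Polynomial.map_sub, Polynomial.map_mul, map_C, hT]
    have hcC : (C (φ (g.leadingCoeff ^ m * r)) : Polynomial ℚ) = C c := by
      congr 1; simp [hc, map_pow]
    rw [hcC, ← hF]
    linear_combination (-(C c)) * hpq
  obtain ⟨j, S, hS⟩ := int_of_mul_intpoly g hgd (C c * q) _ hWmap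
  refine ⟨m + j, C (g.leadingCoeff ^ j) * t, S, ?_, ?_⟩
  · rw [Polynomial.map_mul, map_C, hT, ← mul_assoc, ← C_mul]
    congr 1
    simp only [map_pow, eq_intCast, hc]
    push_cast
    ring
  · rw [hS, ← mul_assoc, ← C_mul]
    congr 1
    simp only [hc]
    push_cast
    ring

theorem statement_7 (f g : Polynomial ℤ)
    (hf : 0 < f.natDegree) (hg : 0 < g.natDegree)
    (hcop : IsCoprime (f.map (Int.castRingHom ℚ)) (g.map (Int.castRingHom ℚ)))
    (r : ℤ) (hrpos : 0 < r)
    (hrmem : ∃ u v : Polynomial ℤ, u * f + v * g = Polynomial.C r)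
    (hrmin : ∀ s : ℤ, 0 < s →
      (∃ u v : Polynomial ℤ, u * f + v * g = Polynomial.C s) → r ≤ s)
    (B : ℤ) (hB : IsBezoutDenom f g B)
    (hBmin : ∀ B' : ℤ, IsBezoutDenom f g B' → B ≤ B') :
    ∃ k : ℕ, B ∣ (Int.gcd f.leadingCoeff g.leadingCoeff : ℤ) ^ k * r := by
  obtain ⟨hB1, p, q, hpd, hqd, hpq, ⟨P, hP⟩, ⟨Q, hQ⟩⟩ := hB
  obtain ⟨u, v, huv⟩ := hrmem
  have hfd : 0 < f.degree := natDegree_pos_iff_degree_pos.mp hf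
  have hgd : 0 < g.degree := natDegree_pos_iff_degree_pos.mp hg
  have hf0 : f ≠ 0 := fun h => by simp [h] at hfd
  have hg0 : g ≠ 0 := fun h => by simp [h] at hgd
  -- divisibility of B into any common denominator N
  have hA : ∀ N : ℤ, N ≠ 0 →
      (∃ P' : Polynomial ℤ, P'.map (Int.castRingHom ℚ) = C (N : ℚ) * p) →
      (∃ Q' : Polynomial ℤ, Q'.map (Int.castRingHom ℚ) = C (N : ℚ) * q) → B ∣ N := by
    rintro N hN ⟨P', hP'⟩ ⟨Q', hQ'⟩
    set G0 : ℤ := ↑(Int.gcd B N) with hG0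
    have hGpos : 0 < G0 := by
      rw [hG0]
      have : B.gcd N ≠ 0 := fun h => hB1.ne' (Int.gcd_eq_zero_iff.mp h).1
      exact_mod_cast Nat.pos_of_ne_zero this
    have hbez : G0 = B * Int.gcdA B N + N * Int.gcdB B N := Int.gcd_eq_gcd_ab B N
    have hbezQ : ((G0 : ℚ)) = (B : ℚ) * ((Int.gcdA B N : ℤ) : ℚ) +
        (N : ℚ) * ((Int.gcdB B N : ℤ) : ℚ) := by exact_mod_cast congrArg (fun z : ℤ => (z : ℚ)) hbez
    have hden : IsBezoutDenom f g G0 := by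
      refine ⟨hGpos, p, q, hpd, hqd, hpq,
        ⟨C (Int.gcdA B N) * P + C (Int.gcdB B N) * P', ?_⟩,
        ⟨C (Int.gcdA B N) * Q + C (Int.gcdB B N) * Q', ?_⟩⟩
      · rw [Polynomial.map_add, Polynomial.map_mul, Polynomial.map_mul, map_C, map_C, hP, hP']
        rw [show (C (G0 : ℚ) : Polynomial ℚ) =
            C ((B : ℚ)) * C ((Int.gcdA B N : ℤ) : ℚ) + C ((N : ℚ)) * C ((Int.gcdB B N : ℤ) : ℚ)
          from by rw [← C_mul, ← C_mul, ← C_add]; exact congrArg C hbezQ]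
        simp only [eq_intCast]
        ring
      · rw [Polynomial.map_add, Polynomial.map_mul, Polynomial.map_mul, map_C, map_C, hQ, hQ']
        rw [show (C (G0 : ℚ) : Polynomial ℚ) =
            C ((B : ℚ)) * C ((Int.gcdA B N : ℤ) : ℚ) + C ((N : ℚ)) * C ((Int.gcdB B N : ℤ) : ℚ)
          from by rw [← C_mul, ← C_mul, ← C_add]; exact congrArg C hbezQ]
        simp only [eq_intCast]
        ring
    have h1 : B ≤ G0 := hBmin G0 hden
    have h2 : G0 ∣ B := hG0 ▸ Int.gcd_dvd_left B N
    have h3 : G0 = B := le_antisymm (Int.le_of_dvd hB1 h2) h1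
    exact h3 ▸ (hG0 ▸ Int.gcd_dvd_right B N)
  -- common denominators from pseudo-division
  obtain ⟨M, T, T', hT, hT'⟩ := denom_lemma f g hfd hgd hcop.symm p q hpd hpq r u v huv
  obtain ⟨M', S, S', hS, hS'⟩ := denom_lemma g f hgd hfd hcop q p hqd
    (by linear_combination hpq) r v u (by linear_combination huv)
  have hane : f.leadingCoeff ≠ 0 := leadingCoeff_ne_zero.mpr hf0
  have hbne : g.leadingCoeff ≠ 0 := leadingCoeff_ne_zero.mpr hg0
  have hN1 : B ∣ g.leadingCoeff ^ M * r :=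
    hA _ (mul_ne_zero (pow_ne_zero _ hbne) hrpos.ne') ⟨T, hT⟩ ⟨T', hT'⟩
  have hN2 : B ∣ f.leadingCoeff ^ M' * r :=
    hA _ (mul_ne_zero (pow_ne_zero _ hane) hrpos.ne') ⟨S', hS'⟩ ⟨S, hS⟩
  -- conclude via gcd manipulations
  have hgcd : B ∣ ↑(Int.gcd (g.leadingCoeff ^ M * r) (f.leadingCoeff ^ M' * r)) :=
    Int.dvd_coe_gcd hN1 hN2
  rw [Int.gcd_mul_right] at hgcd
  refine ⟨M * M', ?_⟩
  have hdvd2 : (↑(Int.gcd (g.leadingCoeff ^ M) (f.leadingCoeff ^ M')) : ℤ) ∣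
      (↑(Int.gcd f.leadingCoeff g.leadingCoeff) : ℤ) ^ (M * M') := by
    rw [Int.coe_gcd, Int.coe_gcd]
    calc gcd (g.leadingCoeff ^ M) (f.leadingCoeff ^ M')
        ∣ (gcd (g.leadingCoeff ^ M) f.leadingCoeff) ^ M' := gcd_pow_right_dvd_pow_gcd
      _ ∣ (gcd g.leadingCoeff f.leadingCoeff ^ M) ^ M' :=
          pow_dvd_pow_of_dvd gcd_pow_left_dvd_pow_gcd M'
      _ = gcd f.leadingCoeff g.leadingCoeff ^ (M * M') := by rw [← pow_mul, gcd_comm]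
  refine dvd_trans ?_ (mul_dvd_mul_right hdvd2 r)
  have : (r.natAbs : ℤ) = r := Int.natAbs_of_nonneg hrpos.le
  rw [← this] at hgcd ⊢
  exact_mod_cast hgcd
end

section
/- Let f and g be coprime integer polynomials of positive degree with deg(f) = m and deg(g) = n, and let d = gcd(L(f), L(g)). Then |Res(f,g)| divides d^j · r(f,g)^{max(m,n)} for some non-negative integer j. -/
open Polynomial

open Matrix

namespace Statement9Aux

/-- Pseudo-division: dividing `h` by `f` after scaling by a power of the leading coefficient. -/
lemma pseudo_div (f : Polynomial ℤ) (hf : 0 < f.natDegree) (h : Polynomial ℤ) :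
    ∃ (t : ℕ) (q v : Polynomial ℤ), v.degree < f.degree ∧
      C (f.leadingCoeff ^ t) * h = q * f + v := by
  have hf0 : f ≠ 0 := ne_zero_of_natDegree_gt hf
  have hl0 : f.leadingCoeff ≠ 0 := leadingCoeff_ne_zero.mpr hf0
  have hbot : (0 : Polynomial ℤ).degree < f.degree := by
    rw [degree_zero]
    exact bot_lt_iff_ne_bot.mpr (by simp [degree_eq_bot, hf0])
  generalize hd : h.natDegree = dh
  induction dh using Nat.strong_induction_on generalizing h with
  | _ dh IH =>
  subst hd
  by_cases h0 : h.degree < f.degree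
  · exact ⟨0, 0, h, h0, by simp⟩
  push_neg at h0
  have hh0 : h ≠ 0 := by
    rintro rfl
    rw [degree_zero, le_bot_iff, degree_eq_bot] at h0
    exact hf0 h0
  have hmn : f.natDegree ≤ h.natDegree := natDegree_le_natDegree h0
  set e := h.natDegree - f.natDegree with he
  set h' := C f.leadingCoeff * h - C h.leadingCoeff * (X ^ e * f) with hh'
  have hdeg1 : (C f.leadingCoeff * h).degree = h.degree := by
    rw [degree_mul, degree_C hl0, zero_add]
  have hdeg2 : (C h.leadingCoeff * (X ^ e * f)).degree = h.degree := by
    rw [degree_mul, degree_C (leadingCoeff_ne_zero.mpr hh0), zero_add, degree_mul,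
      degree_X_pow, degree_eq_natDegree hf0, degree_eq_natDegree hh0,
      ← Nat.cast_add, Nat.sub_add_cancel hmn]
  have hCh0 : C f.leadingCoeff * h ≠ 0 := mul_ne_zero (by simpa using hl0) hh0
  have hlc : (C f.leadingCoeff * h).leadingCoeff
      = (C h.leadingCoeff * (X ^ e * f)).leadingCoeff := by
    rw [leadingCoeff_mul, leadingCoeff_mul, leadingCoeff_mul, leadingCoeff_C, leadingCoeff_C,
      leadingCoeff_X_pow]
    ring
  have hdlt : h'.degree < h.degree := by
    rw [hh']
    calc (C f.leadingCoeff * h - C h.leadingCoeff * (X ^ e * f)).degree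
        < (C f.leadingCoeff * h).degree := degree_sub_lt (hdeg1.trans hdeg2.symm) hCh0 hlc
      _ = h.degree := hdeg1
  by_cases hz : h' = 0
  · have heq : C f.leadingCoeff * h = C h.leadingCoeff * (X ^ e * f) :=
      sub_eq_zero.mp (by rw [← hh']; exact hz)
    exact ⟨1, C h.leadingCoeff * X ^ e, 0, hbot, by rw [pow_one, heq]; ring⟩
  · have hlt : h'.natDegree < h.natDegree := natDegree_lt_natDegree hz hdlt
    obtain ⟨t, q, v, hv, heq⟩ := IH h'.natDegree hlt h' rfl
    refine ⟨t + 1, q + C (f.leadingCoeff ^ t * h.leadingCoeff) * X ^ e, v, hv, ?_⟩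
    have expand : C (f.leadingCoeff ^ (t+1)) * h
        = C (f.leadingCoeff ^ t) * h' + C (f.leadingCoeff ^ t * h.leadingCoeff) * (X ^ e * f) := by
      simp only [hh', C_mul, pow_succ]
      ring
    rw [expand, heq]
    ring


/-- The reversed coefficient-vector map: position `j` holds the coefficient of `X^(D-1-j)`. -/
noncomputable def cvec (D : ℕ) : Polynomial ℤ →ₗ[ℤ] (Fin D → ℤ) where
  toFun q := fun j => q.coeff (D - 1 - (j : ℕ))
  map_add' p q := by funext j; simp
  map_smul' c q := by funext j; simp

lemma cvec_apply (D : ℕ) (q : Polynomial ℤ) (j : Fin D) :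
    cvec D q j = q.coeff (D - 1 - (j : ℕ)) := rfl

lemma cvec_eq_zero {D : ℕ} {q : Polynomial ℤ} (hq : q.natDegree < D) (h : cvec D q = 0) :
    q = 0 := by
  ext k
  rcases lt_or_ge k D with hk | hk
  · have := congrFun h ⟨D - 1 - k, by omega⟩
    rw [cvec_apply] at this
    simpa [show D - 1 - (D - 1 - k) = k by omega] using this
  · simp [coeff_eq_zero_of_natDegree_lt (lt_of_lt_of_le hq hk)]

lemma row_f (f g : Polynomial ℤ) (i : Fin (g.natDegree + f.natDegree))
    (hi : (i : ℕ) < g.natDegree) :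
    sylvesterMatrix f g i = cvec (g.natDegree + f.natDegree)
      (X ^ (g.natDegree - 1 - (i : ℕ)) * f) := by
  funext j
  have hj : (j : ℕ) < g.natDegree + f.natDegree := j.isLt
  rw [cvec_apply, mul_comm, coeff_mul_X_pow']
  show (if (i : ℕ) < g.natDegree then _ else _) = _
  rw [if_pos hi]
  split_ifs with h1 h2 h3
  · congr 1
    omega
  · exfalso; omega
  · refine (coeff_eq_zero_of_natDegree_lt ?_).symm
    omega
  · rfl

lemma row_g (f g : Polynomial ℤ) (i : Fin (g.natDegree + f.natDegree))
    (hi : g.natDegree ≤ (i : ℕ)) :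
    sylvesterMatrix f g i = cvec (g.natDegree + f.natDegree)
      (X ^ (f.natDegree - 1 - ((i : ℕ) - g.natDegree)) * g) := by
  funext j
  have hj : (j : ℕ) < g.natDegree + f.natDegree := j.isLt
  have hi2 : (i : ℕ) < g.natDegree + f.natDegree := i.isLt
  rw [cvec_apply, mul_comm, coeff_mul_X_pow']
  show (if (i : ℕ) < g.natDegree then _ else _) = _
  rw [if_neg (by omega)]
  split_ifs with h1 h2 h3
  · congr 1
    omega
  · exfalso; omega
  · refine (coeff_eq_zero_of_natDegree_lt ?_).symm
    omega
  · rfl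

lemma syl_tri_f (f g : Polynomial ℤ) (i j : Fin (g.natDegree + f.natDegree))
    (hi : (i : ℕ) < g.natDegree) (hj : (j : ℕ) < (i : ℕ)) :
    sylvesterMatrix f g i j = 0 := by
  simp only [sylvesterMatrix, Matrix.of_apply]
  rw [if_pos hi, if_neg (by omega)]

lemma syl_diag_f (f g : Polynomial ℤ) (i j : Fin (g.natDegree + f.natDegree))
    (hi : (i : ℕ) < g.natDegree) (hj : (j : ℕ) = (i : ℕ)) :
    sylvesterMatrix f g i j = f.leadingCoeff := by
  simp only [sylvesterMatrix, Matrix.of_apply]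
  rw [if_pos hi, if_pos (by omega)]
  rw [show f.natDegree + (i : ℕ) - (j : ℕ) = f.natDegree by omega, coeff_natDegree]

lemma syl_tri_g (f g : Polynomial ℤ) (i j : Fin (g.natDegree + f.natDegree))
    (hi : g.natDegree ≤ (i : ℕ)) (hj : (j : ℕ) < (i : ℕ) - g.natDegree) :
    sylvesterMatrix f g i j = 0 := by
  simp only [sylvesterMatrix, Matrix.of_apply]
  rw [if_neg (by omega), if_neg (by omega)]

lemma syl_diag_g (f g : Polynomial ℤ) (i j : Fin (g.natDegree + f.natDegree))
    (hi : g.natDegree ≤ (i : ℕ)) (hj : (j : ℕ) = (i : ℕ) - g.natDegree) :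
    sylvesterMatrix f g i j = g.leadingCoeff := by
  simp only [sylvesterMatrix, Matrix.of_apply]
  rw [if_neg (by omega), if_pos (by omega)]
  rw [show g.natDegree + ((i : ℕ) - g.natDegree) - (j : ℕ) = g.natDegree by omega,
    coeff_natDegree]

/-- The lattice spanned by the rows of the Sylvester matrix. -/
noncomputable def lat (f g : Polynomial ℤ) :
    Submodule ℤ (Fin (g.natDegree + f.natDegree) → ℤ) :=
  Submodule.span ℤ (Set.range (sylvesterMatrix f g))

lemma shift_f_mem (f g : Polynomial ℤ) (hn : 0 < g.natDegree) {i : ℕ} (hi : i < g.natDegree) :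
    cvec (g.natDegree + f.natDegree) (X ^ i * f) ∈ lat f g := by
  have : cvec (g.natDegree + f.natDegree) (X ^ i * f)
      = sylvesterMatrix f g ⟨g.natDegree - 1 - i, by omega⟩ := by
    rw [row_f f g ⟨g.natDegree - 1 - i, by omega⟩ (by simp; omega)]
    congr 3
    simp only [Fin.val_mk]
    omega
  rw [this]
  exact Submodule.subset_span ⟨_, rfl⟩

lemma shift_g_mem (f g : Polynomial ℤ) (hm : 0 < f.natDegree) {i : ℕ} (hi : i < f.natDegree) :
    cvec (g.natDegree + f.natDegree) (X ^ i * g) ∈ lat f g := by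
  have : cvec (g.natDegree + f.natDegree) (X ^ i * g)
      = sylvesterMatrix f g ⟨g.natDegree + (f.natDegree - 1 - i), by omega⟩ := by
    rw [row_g f g ⟨g.natDegree + (f.natDegree - 1 - i), by omega⟩ (by simp)]
    congr 3
    simp only [Fin.val_mk]
    omega
  rw [this]
  exact Submodule.subset_span ⟨_, rfl⟩

lemma mem_lat (f g : Polynomial ℤ) (hm : 0 < f.natDegree) (hn : 0 < g.natDegree)
    {u v : Polynomial ℤ} (hu : u.natDegree < g.natDegree) (hv : v.natDegree < f.natDegree) :
    cvec (g.natDegree + f.natDegree) (u * f + v * g) ∈ lat f g := by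
  rw [map_add]
  refine Submodule.add_mem _ ?_ ?_
  · rw [show u * f = ∑ i ∈ Finset.range g.natDegree, (monomial i) (u.coeff i) * f by
      rw [← Finset.sum_mul, ← Polynomial.as_sum_range' u g.natDegree hu]]
    rw [map_sum]
    refine Submodule.sum_mem _ fun i hi => ?_
    have : (monomial i) (u.coeff i) * f = (u.coeff i) • (X ^ i * f) := by
      rw [← C_mul_X_pow_eq_monomial, smul_eq_C_mul]
      ring
    rw [this, _root_.map_smul]
    exact Submodule.smul_mem _ _ (shift_f_mem f g hn (Finset.mem_range.mp hi))
  · rw [show v * g = ∑ i ∈ Finset.range f.natDegree, (monomial i) (v.coeff i) * g by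
      rw [← Finset.sum_mul, ← Polynomial.as_sum_range' v f.natDegree hv]]
    rw [map_sum]
    refine Submodule.sum_mem _ fun i hi => ?_
    have : (monomial i) (v.coeff i) * g = (v.coeff i) • (X ^ i * g) := by
      rw [← C_mul_X_pow_eq_monomial, smul_eq_C_mul]
      ring
    rw [this, _root_.map_smul]
    exact Submodule.smul_mem _ _ (shift_g_mem f g hm (Finset.mem_range.mp hi))


lemma reduce (f g : Polynomial ℤ) (hm : 0 < f.natDegree) (hn : 0 < g.natDegree)
    (u₀ v₀ : Polynomial ℤ) (c : ℤ) (huv : u₀ * f + v₀ * g = C c)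
    (k : ℕ) (hk : k < g.natDegree + f.natDegree) :
    ∃ (t : ℕ) (u v : Polynomial ℤ), u.natDegree < g.natDegree ∧ v.natDegree < f.natDegree ∧
      u * f + v * g = C (f.leadingCoeff ^ t * c) * X ^ k := by
  have hf0 : f ≠ 0 := ne_zero_of_natDegree_gt hm
  have hg0 : g ≠ 0 := ne_zero_of_natDegree_gt hn
  obtain ⟨t, q, v, hvdeg, hred⟩ := pseudo_div f hm (v₀ * X ^ k)
  set u := C (f.leadingCoeff ^ t) * u₀ * X ^ k + q * g with hu
  have heq : u * f + v * g = C (f.leadingCoeff ^ t * c) * X ^ k := by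
    rw [C_mul, hu]
    linear_combination (C (f.leadingCoeff ^ t) * X ^ k) * huv - g * hred
  have hvlt : v.natDegree < f.natDegree := by
    rcases eq_or_ne v 0 with rfl | hv0
    · simpa using hm
    · exact natDegree_lt_natDegree hv0 hvdeg
  refine ⟨t, u, v, ?_, hvlt, heq⟩
  have hueq : u * f = C (f.leadingCoeff ^ t * c) * X ^ k - v * g := eq_sub_of_add_eq heq
  have hvg : (v * g).natDegree ≤ f.natDegree + g.natDegree - 1 := by
    rcases eq_or_ne v 0 with rfl | hv0
    · simp
    · exact (natDegree_mul_le).trans (by omega)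
  rcases eq_or_ne u 0 with h0 | h0
  · rw [h0]; simpa using hn
  · have h1 : (u * f).natDegree ≤ g.natDegree + f.natDegree - 1 := by
      rw [hueq]
      refine natDegree_sub_le _ _ |>.trans ?_
      have h2 : (C (f.leadingCoeff ^ t * c) * X ^ k).natDegree ≤ k :=
        natDegree_C_mul_X_pow_le _ _
      omega
    have h3 : (u * f).natDegree = u.natDegree + f.natDegree := natDegree_mul h0 hf0
    omega

lemma single_mem (f g : Polynomial ℤ) (hm : 0 < f.natDegree) (hn : 0 < g.natDegree)
    (c : ℤ) (u₀ v₀ : Polynomial ℤ) (huv : u₀ * f + v₀ * g = C c)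
    (j : Fin (g.natDegree + f.natDegree)) :
    ∃ t : ℕ, (f.leadingCoeff ^ t * c) • Pi.single j (1:ℤ) ∈ lat f g := by
  have hj : (j : ℕ) < g.natDegree + f.natDegree := j.isLt
  obtain ⟨t, u, v, hu, hv, heq⟩ := reduce f g hm hn u₀ v₀ c huv (g.natDegree + f.natDegree - 1 - (j : ℕ)) (by omega)
  have hmem := mem_lat f g hm hn hu hv
  rw [heq] at hmem
  have hkey : cvec (g.natDegree + f.natDegree) (C (f.leadingCoeff ^ t * c) * X ^ (g.natDegree + f.natDegree - 1 - (j : ℕ)))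
      = (f.leadingCoeff ^ t * c) • Pi.single j (1:ℤ) := by
    funext j'
    have hj' : (j' : ℕ) < g.natDegree + f.natDegree := j'.isLt
    rw [cvec_apply, coeff_C_mul, coeff_X_pow, Pi.smul_apply, Pi.single_apply]
    simp only [smul_eq_mul, mul_ite, mul_one, mul_zero]
    have hiff : (g.natDegree + f.natDegree - 1 - (j' : ℕ) = g.natDegree + f.natDegree - 1 - (j : ℕ)) ↔ j' = j := by
      rw [← Fin.val_eq_val]
      omega
    split_ifs with h1 h2 h2
    · rfl
    · exact absurd (hiff.mp h1) h2
    · exact absurd (hiff.mpr h2) h1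
    · rfl
  rw [hkey] at hmem
  exact ⟨t, hmem⟩


lemma det_ne_zero (f g : Polynomial ℤ) (hm : 0 < f.natDegree) (hn : 0 < g.natDegree)
    (hcop : IsCoprime (f.map (Int.castRingHom ℚ)) (g.map (Int.castRingHom ℚ))) :
    (sylvesterMatrix f g).det ≠ 0 := by
  have hf0 : f ≠ 0 := ne_zero_of_natDegree_gt hm
  have hg0 : g ≠ 0 := ne_zero_of_natDegree_gt hn
  intro hdet
  obtain ⟨w, hw0, hw⟩ := Matrix.exists_vecMul_eq_zero_iff.mpr hdet
  set u : Polynomial ℤ :=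
    ∑ i : Fin g.natDegree, C (w (Fin.castAdd f.natDegree i)) * X ^ (g.natDegree - 1 - (i:ℕ))
    with hudef
  set v : Polynomial ℤ :=
    ∑ i : Fin f.natDegree, C (w (Fin.natAdd g.natDegree i)) * X ^ (f.natDegree - 1 - (i:ℕ))
    with hvdef
  have hsum : cvec (g.natDegree + f.natDegree) (u * f + v * g)
      = ∑ i : Fin (g.natDegree + f.natDegree), w i • sylvesterMatrix f g i := by
    rw [map_add, Fin.sum_univ_add]
    congr 1
    · rw [hudef, Finset.sum_mul, map_sum]
      refine Finset.sum_congr rfl fun i _ => ?_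
      rw [mul_assoc, ← smul_eq_C_mul, _root_.map_smul,
        row_f f g (Fin.castAdd _ i) (by simpa using i.isLt)]
      congr 3 <;> simp
    · rw [hvdef, Finset.sum_mul, map_sum]
      refine Finset.sum_congr rfl fun i _ => ?_
      rw [mul_assoc, ← smul_eq_C_mul, _root_.map_smul,
        row_g f g (Fin.natAdd _ i) (by simp)]
      congr 3 <;> simp
  have hrows : ∑ i : Fin (g.natDegree + f.natDegree), w i • sylvesterMatrix f g i = 0 := by
    funext j
    have := congrFun hw j
    simpa [Matrix.vecMul, dotProduct, Finset.sum_apply] using this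
  have hq0 : u * f + v * g = 0 := by
    refine cvec_eq_zero ?_ (by rw [hsum, hrows])
    have hud : u.natDegree ≤ g.natDegree - 1 :=
      natDegree_sum_le_of_forall_le _ _ fun i _ =>
        (natDegree_C_mul_X_pow_le _ _).trans (by omega)
    have hvd : v.natDegree ≤ f.natDegree - 1 :=
      natDegree_sum_le_of_forall_le _ _ fun i _ =>
        (natDegree_C_mul_X_pow_le _ _).trans (by omega)
    refine (natDegree_add_le _ _).trans_lt ?_
    have h1 : (u * f).natDegree ≤ u.natDegree + f.natDegree := natDegree_mul_le
    have h2 : (v * g).natDegree ≤ v.natDegree + g.natDegree := natDegree_mul_le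
    omega
  -- move to ℚ and use coprimality
  have hQ : (u.map (Int.castRingHom ℚ)) * (f.map (Int.castRingHom ℚ))
      + (v.map (Int.castRingHom ℚ)) * (g.map (Int.castRingHom ℚ)) = 0 := by
    rw [← Polynomial.map_mul, ← Polynomial.map_mul, ← Polynomial.map_add, hq0,
      Polynomial.map_zero]
  have hinj : Function.Injective (Int.castRingHom ℚ) := Int.cast_injective
  have hdvd : f.map (Int.castRingHom ℚ) ∣ (v.map (Int.castRingHom ℚ)) * (g.map (Int.castRingHom ℚ)) :=
    ⟨-(u.map (Int.castRingHom ℚ)), by linear_combination hQ⟩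
  have hv0 : v = 0 := by
    by_contra hv0
    have hvQ0 : v.map (Int.castRingHom ℚ) ≠ 0 := fun h =>
      hv0 ((Polynomial.map_eq_zero_iff hinj).mp h)
    have hfv : f.map (Int.castRingHom ℚ) ∣ v.map (Int.castRingHom ℚ) :=
      hcop.dvd_of_dvd_mul_right hdvd
    have hdeg : (v.map (Int.castRingHom ℚ)).degree < (f.map (Int.castRingHom ℚ)).degree := by
      rw [degree_map_eq_of_injective hinj, degree_map_eq_of_injective hinj]
      have hvd : v.natDegree ≤ f.natDegree - 1 :=
        natDegree_sum_le_of_forall_le _ _ fun i _ =>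
          (natDegree_C_mul_X_pow_le _ _).trans (by omega)
      calc v.degree ≤ (v.natDegree : WithBot ℕ) := degree_le_natDegree
        _ < (f.natDegree : WithBot ℕ) := by exact_mod_cast by omega
        _ = f.degree := (degree_eq_natDegree hf0).symm
    exact hvQ0 (Polynomial.eq_zero_of_dvd_of_degree_lt hfv hdeg)
  have hu0 : u = 0 := by
    rw [hv0, zero_mul, add_zero, mul_eq_zero] at hq0
    exact hq0.resolve_right hf0
  -- recover w = 0
  refine hw0 (funext fun i => ?_)
  rcases lt_or_ge (i : ℕ) g.natDegree with hi | hi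
  · have : u.coeff (g.natDegree - 1 - (i : ℕ)) = w i := by
      rw [hudef, finset_sum_coeff]
      rw [Finset.sum_eq_single (⟨(i : ℕ), hi⟩ : Fin g.natDegree)]
      · rw [coeff_C_mul, coeff_X_pow, if_pos (by simp), mul_one]
        congr 1 <;> exact Fin.ext (by simp)
      · intro b _ hb
        rw [coeff_C_mul, coeff_X_pow, if_neg, mul_zero]
        have hbv : (b : ℕ) ≠ (i : ℕ) := fun h => hb (Fin.ext (by simp [h]))
        have := b.isLt
        omega
      · intro h
        exact absurd (Finset.mem_univ _) h
    rw [← this, hu0]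
    simp
  · have hi2 : (i : ℕ) < g.natDegree + f.natDegree := i.isLt
    have : v.coeff (f.natDegree - 1 - ((i : ℕ) - g.natDegree)) = w i := by
      rw [hvdef, finset_sum_coeff]
      rw [Finset.sum_eq_single (⟨(i : ℕ) - g.natDegree, by omega⟩ : Fin f.natDegree)]
      · rw [coeff_C_mul, coeff_X_pow, if_pos (by simp), mul_one]
        congr 1
        refine Fin.ext ?_
        simp [Fin.natAdd]
        omega
      · intro b _ hb
        rw [coeff_C_mul, coeff_X_pow, if_neg, mul_zero]
        have hbv : (b : ℕ) ≠ (i : ℕ) - g.natDegree := fun h => hb (Fin.ext (by simp [h]))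
        have := b.isLt
        omega
      · intro h
        exact absurd (Finset.mem_univ _) h
    rw [← this, hv0]
    simp


lemma single_mem_g (f g : Polynomial ℤ) (hm : 0 < f.natDegree) (hn : 0 < g.natDegree)
    (c : ℤ) (u₀ v₀ : Polynomial ℤ) (huv : u₀ * f + v₀ * g = C c)
    (j : Fin (g.natDegree + f.natDegree)) :
    ∃ t : ℕ, (g.leadingCoeff ^ t * c) • Pi.single j (1:ℤ) ∈ lat f g := by
  have hj : (j : ℕ) < g.natDegree + f.natDegree := j.isLt
  obtain ⟨t, u, v, hu, hv, heq⟩ := reduce g f hn hm v₀ u₀ c (by linear_combination huv)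
    (g.natDegree + f.natDegree - 1 - (j : ℕ)) (by omega)
  have hmem := mem_lat f g hm hn hv hu
  rw [show v * f + u * g = u * g + v * f by ring, heq] at hmem
  have hkey : cvec (g.natDegree + f.natDegree)
      (C (g.leadingCoeff ^ t * c) * X ^ (g.natDegree + f.natDegree - 1 - (j : ℕ)))
      = (g.leadingCoeff ^ t * c) • Pi.single j (1:ℤ) := by
    funext j'
    have hj' : (j' : ℕ) < g.natDegree + f.natDegree := j'.isLt
    rw [cvec_apply, coeff_C_mul, coeff_X_pow, Pi.smul_apply, Pi.single_apply]
    simp only [smul_eq_mul, mul_ite, mul_one, mul_zero]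
    have hiff : (g.natDegree + f.natDegree - 1 - (j' : ℕ)
        = g.natDegree + f.natDegree - 1 - (j : ℕ)) ↔ j' = j := by
      rw [← Fin.val_eq_val]
      omega
    split_ifs with h1 h2 h2
    · rfl
    · exact absurd (hiff.mp h1) h2
    · exact absurd (hiff.mpr h2) h1
    · rfl
  rw [hkey] at hmem
  exact ⟨t, hmem⟩

lemma snf_package (f g : Polynomial ℤ) (hm : 0 < f.natDegree) (hn : 0 < g.natDegree)
    (hcop : IsCoprime (f.map (Int.castRingHom ℚ)) (g.map (Int.castRingHom ℚ)))
    (r : ℤ) (u₀ v₀ : Polynomial ℤ) (huv : u₀ * f + v₀ * g = C r) :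
    ∃ (a : Fin (g.natDegree + f.natDegree) → ℤ) (T : ℕ),
      ((sylvesterMatrix f g).det.natAbs = ∏ i, (a i).natAbs)
      ∧ (∀ i, a i ∣ f.leadingCoeff ^ T * r)
      ∧ (∀ i, a i ∣ g.leadingCoeff ^ T * r)
      ∧ (∀ p : ℕ, p.Prime → ¬((p:ℤ) ∣ f.leadingCoeff) →
          (Finset.univ.filter fun i => (p:ℤ) ∣ a i).card ≤ f.natDegree)
      ∧ (∀ p : ℕ, p.Prime → ¬((p:ℤ) ∣ g.leadingCoeff) →
          (Finset.univ.filter fun i => (p:ℤ) ∣ a i).card ≤ g.natDegree) := by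
  classical
  have hdet := det_ne_zero f g hm hn hcop
  -- injectivity of the row-span map
  have hinj : Function.Injective (sylvesterMatrix f g).vecMulLinear := by
    intro x y hxy
    by_contra hne
    refine hdet (Matrix.exists_vecMul_eq_zero_iff.mp ⟨x - y, sub_ne_zero.mpr hne, ?_⟩)
    rw [Matrix.sub_vecMul, ← Matrix.vecMulLinear_apply, ← Matrix.vecMulLinear_apply, hxy,
      sub_self]
  have hrange : LinearMap.range (sylvesterMatrix f g).vecMulLinear = lat f g := by
    rw [range_vecMulLinear]; rfl
  let e1 : (Fin (g.natDegree + f.natDegree) → ℤ) ≃ₗ[ℤ] lat f g :=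
    (LinearEquiv.ofInjective _ hinj).trans (LinearEquiv.ofEq _ _ hrange)
  obtain ⟨k, snf⟩ := Submodule.smithNormalForm
    (Pi.basisFun ℤ (Fin (g.natDegree + f.natDegree))) (lat f g)
  have hk : k = g.natDegree + f.natDegree := by
    have hcongr := Fintype.card_congr
      (snf.bN.indexEquiv ((Pi.basisFun ℤ (Fin (g.natDegree + f.natDegree))).map e1))
    simpa using hcongr
  subst hk
  have hrow : ∀ i, sylvesterMatrix f g i ∈ lat f g :=
    fun i => Submodule.subset_span ⟨i, rfl⟩
  -- the product formula
  have hprod : (sylvesterMatrix f g).det.natAbs = ∏ i, (snf.a i).natAbs := by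
    have hφdet : LinearMap.det (sylvesterMatrix f g).vecMulLinear
        = (sylvesterMatrix f g).det := by
      rw [← Matrix.mulVecLin_transpose, ← Matrix.toLin'_apply', LinearMap.det_toLin',
        Matrix.det_transpose]
    have hcomp1 : (lat f g).subtype ∘ₗ (e1 : _ →ₗ[ℤ] _)
        = (sylvesterMatrix f g).vecMulLinear := by
      ext x
      rfl
    let e2 : (Fin (g.natDegree + f.natDegree) → ℤ) ≃ₗ[ℤ] lat f g :=
      (Pi.basisFun ℤ (Fin (g.natDegree + f.natDegree))).equiv snf.bN (Equiv.refl _)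
    have hassoc : Associated (LinearMap.det ((lat f g).subtype ∘ₗ (e1 : _ →ₗ[ℤ] _)))
        (LinearMap.det ((lat f g).subtype ∘ₗ (e2 : _ →ₗ[ℤ] _))) :=
      LinearMap.associated_det_comp_equiv _ _ _
    rw [hcomp1] at hassoc
    -- compute the determinant of the second map
    let Q : Matrix (Fin (g.natDegree + f.natDegree)) (Fin (g.natDegree + f.natDegree)) ℤ :=
      Matrix.of fun i j => snf.bM (snf.f j) i
    have hψmat : LinearMap.toMatrix (Pi.basisFun ℤ (Fin (g.natDegree + f.natDegree)))
        (Pi.basisFun ℤ (Fin (g.natDegree + f.natDegree)))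
        ((lat f g).subtype ∘ₗ (e2 : _ →ₗ[ℤ] _)) = Q * Matrix.diagonal snf.a := by
      ext i j
      rw [LinearMap.toMatrix_apply, Matrix.mul_diagonal]
      have he2 : e2 ((Pi.basisFun ℤ (Fin (g.natDegree + f.natDegree))) j) = snf.bN j := by
        rw [Module.Basis.equiv_apply, Equiv.refl_apply]
      rw [LinearMap.comp_apply, LinearEquiv.coe_coe, he2]
      show (Pi.basisFun ℤ _).repr ((snf.bN j : Fin (g.natDegree + f.natDegree) → ℤ)) i = _
      rw [snf.snf j, Pi.basisFun_repr]
      simp [Q, mul_comm]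
    have hQdet : IsUnit Q.det := by
      have hbij : Function.Bijective ⇑snf.f :=
        Finite.injective_iff_bijective.mp snf.f.injective
      let σ : Fin (g.natDegree + f.natDegree) ≃ Fin (g.natDegree + f.natDegree) :=
        Equiv.ofBijective _ hbij
      have hQ : Q = (Pi.basisFun ℤ (Fin (g.natDegree + f.natDegree))).toMatrix
          ⇑(snf.bM.reindex σ.symm) := by
        ext i j
        rw [Module.Basis.toMatrix_apply, Pi.basisFun_repr, Module.Basis.reindex_apply, Equiv.symm_symm]
        rfl
      rw [hQ]
      letI := Module.Basis.invertibleToMatrix (Pi.basisFun ℤ (Fin (g.natDegree + f.natDegree)))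
        (snf.bM.reindex σ.symm)
      exact Matrix.isUnit_det_of_invertible _
    have hdet2 : LinearMap.det ((lat f g).subtype ∘ₗ (e2 : _ →ₗ[ℤ] _))
        = Q.det * ∏ i, snf.a i := by
      rw [← LinearMap.det_toMatrix (Pi.basisFun ℤ (Fin (g.natDegree + f.natDegree))), hψmat,
        Matrix.det_mul, Matrix.det_diagonal]
    have hnatabs := Int.natAbs_eq_iff_associated.mpr hassoc
    rw [hφdet] at hnatabs
    rw [hnatabs, hdet2, Int.natAbs_mul, Int.isUnit_iff_natAbs_eq.mp hQdet, one_mul]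
    exact map_prod Int.natAbsHom snf.a Finset.univ
  -- divisibility of the invariant factors
  have hdvd_f : ∃ T, ∀ i, snf.a i ∣ f.leadingCoeff ^ T * r := by
    choose t ht using fun j => single_mem f g hm hn r u₀ v₀ huv j
    refine ⟨Finset.univ.sup t, fun i => ?_⟩
    have hmono : ∀ j : Fin (g.natDegree + f.natDegree),
        (f.leadingCoeff ^ (Finset.univ.sup t) * r) • Pi.single j (1:ℤ) ∈ lat f g := by
      intro j
      have hle : t j ≤ Finset.univ.sup t := Finset.le_sup (Finset.mem_univ j)
      have heq : ((f.leadingCoeff ^ (Finset.univ.sup t) * r) • Pi.single j (1:ℤ)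
          : Fin (g.natDegree + f.natDegree) → ℤ)
          = f.leadingCoeff ^ (Finset.univ.sup t - t j)
            • ((f.leadingCoeff ^ (t j) * r) • Pi.single j (1:ℤ)) := by
        rw [smul_smul, ← mul_assoc, ← pow_add, Nat.sub_add_cancel hle]
      rw [heq]
      exact Submodule.smul_mem _ _ (ht j)
    have hy : ((f.leadingCoeff ^ (Finset.univ.sup t) * r) • (snf.bM (snf.f i))) ∈ lat f g := by
      have hrep : (snf.bM (snf.f i)) = ∑ j, Pi.single j (snf.bM (snf.f i) j) :=
        (Finset.univ_sum_single _).symm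
      rw [hrep, Finset.smul_sum]
      refine Submodule.sum_mem _ fun j _ => ?_
      have hsingle : (Pi.single j (snf.bM (snf.f i) j)
          : Fin (g.natDegree + f.natDegree) → ℤ)
          = (snf.bM (snf.f i) j) • Pi.single j (1:ℤ) := by
        rw [← Pi.single_smul, smul_eq_mul, mul_one]
      rw [hsingle, smul_comm]
      exact Submodule.smul_mem _ _ (hmono j)
    have h1 := snf.repr_apply_embedding_eq_repr_smul (⟨_, hy⟩ : lat f g) (i := i)
    simp only [Submodule.coe_mk] at h1
    have hL : snf.bM.repr ((f.leadingCoeff ^ (Finset.univ.sup t) * r) • (snf.bM (snf.f i))) (snf.f i)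
        = f.leadingCoeff ^ (Finset.univ.sup t) * r := by
      rw [_root_.map_smul, Module.Basis.repr_self]
      simp
    have hR : snf.bN.repr (snf.a i • (⟨_, hy⟩ : lat f g)) i
        = snf.a i * snf.bN.repr (⟨_, hy⟩ : lat f g) i := by
      rw [_root_.map_smul]
      simp
    rw [hL, hR] at h1
    exact ⟨_, h1⟩
  have hdvd_g : ∃ T, ∀ i, snf.a i ∣ g.leadingCoeff ^ T * r := by
    choose t ht using fun j => single_mem_g f g hm hn r u₀ v₀ huv j
    refine ⟨Finset.univ.sup t, fun i => ?_⟩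
    have hmono : ∀ j : Fin (g.natDegree + f.natDegree),
        (g.leadingCoeff ^ (Finset.univ.sup t) * r) • Pi.single j (1:ℤ) ∈ lat f g := by
      intro j
      have hle : t j ≤ Finset.univ.sup t := Finset.le_sup (Finset.mem_univ j)
      have heq : ((g.leadingCoeff ^ (Finset.univ.sup t) * r) • Pi.single j (1:ℤ)
          : Fin (g.natDegree + f.natDegree) → ℤ)
          = g.leadingCoeff ^ (Finset.univ.sup t - t j)
            • ((g.leadingCoeff ^ (t j) * r) • Pi.single j (1:ℤ)) := by
        rw [smul_smul, ← mul_assoc, ← pow_add, Nat.sub_add_cancel hle]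
      rw [heq]
      exact Submodule.smul_mem _ _ (ht j)
    have hy : ((g.leadingCoeff ^ (Finset.univ.sup t) * r) • (snf.bM (snf.f i))) ∈ lat f g := by
      have hrep : (snf.bM (snf.f i)) = ∑ j, Pi.single j (snf.bM (snf.f i) j) :=
        (Finset.univ_sum_single _).symm
      rw [hrep, Finset.smul_sum]
      refine Submodule.sum_mem _ fun j _ => ?_
      have hsingle : (Pi.single j (snf.bM (snf.f i) j)
          : Fin (g.natDegree + f.natDegree) → ℤ)
          = (snf.bM (snf.f i) j) • Pi.single j (1:ℤ) := by
        rw [← Pi.single_smul, smul_eq_mul, mul_one]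
      rw [hsingle, smul_comm]
      exact Submodule.smul_mem _ _ (hmono j)
    have h1 := snf.repr_apply_embedding_eq_repr_smul (⟨_, hy⟩ : lat f g) (i := i)
    simp only [Submodule.coe_mk] at h1
    have hL : snf.bM.repr ((g.leadingCoeff ^ (Finset.univ.sup t) * r) • (snf.bM (snf.f i))) (snf.f i)
        = g.leadingCoeff ^ (Finset.univ.sup t) * r := by
      rw [_root_.map_smul, Module.Basis.repr_self]
      simp
    have hR : snf.bN.repr (snf.a i • (⟨_, hy⟩ : lat f g)) i
        = snf.a i * snf.bN.repr (⟨_, hy⟩ : lat f g) i := by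
      rw [_root_.map_smul]
      simp
    rw [hL, hR] at h1
    exact ⟨_, h1⟩
  -- counting
  have hdecomp : sylvesterMatrix f g
      = (Matrix.of fun i i' => ((snf.bN.repr ⟨sylvesterMatrix f g i, hrow i⟩) i' : ℤ))
        * (Matrix.diagonal snf.a * Matrix.of fun i' j => snf.bM (snf.f i') j) := by
    ext i j
    rw [Matrix.mul_apply]
    have hsr := Module.Basis.sum_repr snf.bN ⟨sylvesterMatrix f g i, hrow i⟩
    calc sylvesterMatrix f g i j
        = ((⟨sylvesterMatrix f g i, hrow i⟩ : lat f g) :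
            Fin (g.natDegree + f.natDegree) → ℤ) j := rfl
      _ = ((∑ i', (snf.bN.repr ⟨sylvesterMatrix f g i, hrow i⟩) i' • snf.bN i' : lat f g) :
            Fin (g.natDegree + f.natDegree) → ℤ) j := by rw [hsr]
      _ = ∑ i', (snf.bN.repr ⟨sylvesterMatrix f g i, hrow i⟩) i'
            * (snf.a i' * snf.bM (snf.f i') j) := by
          rw [Submodule.coe_sum, Finset.sum_apply]
          refine Finset.sum_congr rfl fun i' _ => ?_
          rw [Submodule.coe_smul, snf.snf i']
          simp [mul_assoc]
      _ = ∑ i', Matrix.of (fun i i' => ((snf.bN.repr ⟨sylvesterMatrix f g i, hrow i⟩) i' : ℤ)) i i'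
            * (Matrix.diagonal snf.a * Matrix.of fun i' j => snf.bM (snf.f i') j) i' j := by
          refine Finset.sum_congr rfl fun i' _ => ?_
          rw [Matrix.diagonal_mul]
          rfl
  have hcount_f : ∀ p : ℕ, p.Prime → ¬((p:ℤ) ∣ f.leadingCoeff) →
      (Finset.univ.filter fun i => (p:ℤ) ∣ snf.a i).card ≤ f.natDegree := by
    intro p hp hpl
    haveI : Fact p.Prime := ⟨hp⟩
    set φ := Int.castRingHom (ZMod p) with hφ
    set Sbar := (sylvesterMatrix f g).map ⇑φ with hSbar
    have hrankle : Sbar.rank ≤ (Matrix.diagonal fun i => φ (snf.a i)).rank := by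
      have hmap : Sbar
          = ((Matrix.of fun i i' => ((snf.bN.repr ⟨sylvesterMatrix f g i, hrow i⟩) i' : ℤ)).map ⇑φ)
            * ((Matrix.diagonal fun i => φ (snf.a i))
              * ((Matrix.of fun i' j => snf.bM (snf.f i') j).map ⇑φ)) := by
        rw [hSbar]
        conv_lhs => rw [hdecomp]
        rw [Matrix.map_mul, Matrix.map_mul, Matrix.diagonal_map (map_zero φ)]
      rw [hmap]
      exact (Matrix.rank_mul_le_right _ _).trans (Matrix.rank_mul_le_left _ _)
    have hl0 : φ f.leadingCoeff ≠ 0 := by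
      rw [hφ, Int.coe_castRingHom, Ne, ZMod.intCast_zmod_eq_zero_iff_dvd]
      exact hpl
    set B : Matrix (Fin g.natDegree) (Fin g.natDegree) (ZMod p) :=
      Matrix.of fun i j => Sbar (Fin.castAdd f.natDegree i) (Fin.castAdd f.natDegree j) with hB
    have hBtri : ∀ i j : Fin g.natDegree, j < i → B i j = 0 := by
      intro i j hji
      show φ (sylvesterMatrix f g (Fin.castAdd f.natDegree i) (Fin.castAdd f.natDegree j)) = 0
      rw [syl_tri_f f g _ _ (by simpa using i.isLt) (by simpa using hji), map_zero]
    have hBdiag : ∀ i : Fin g.natDegree, B i i = φ f.leadingCoeff := by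
      intro i
      show φ (sylvesterMatrix f g (Fin.castAdd f.natDegree i) (Fin.castAdd f.natDegree i)) = _
      rw [syl_diag_f f g _ _ (by simpa using i.isLt) rfl]
    have hBdet : B.det = (φ f.leadingCoeff) ^ g.natDegree := by
      rw [Matrix.det_of_upperTriangular (fun i j h => hBtri i j h)]
      simp [hBdiag, Finset.prod_const]
    have hli : LinearIndependent (ZMod p)
        (fun i : Fin g.natDegree => Sbar (Fin.castAdd f.natDegree i)) := by
      rw [Fintype.linearIndependent_iff]
      intro c hc
      have hBunit : IsUnit B := by
        rw [Matrix.isUnit_iff_isUnit_det, hBdet]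
        exact (isUnit_iff_ne_zero.mpr (pow_ne_zero _ hl0))
      have hvm : c ᵥ* B = 0 := by
        funext j
        have := congrFun hc (Fin.castAdd f.natDegree j)
        simpa [Matrix.vecMul, dotProduct, hB, Finset.sum_apply] using this
      have hcinj := Matrix.vecMul_injective_iff_isUnit.mpr hBunit
      have hc0 : c = 0 := hcinj (by show c ᵥ* B = 0 ᵥ* B; rw [hvm, Matrix.zero_vecMul])
      exact fun i => congrFun hc0 i
    have hnle : g.natDegree ≤ Sbar.rank := by
      have h1 : Module.finrank (ZMod p) (Submodule.span (ZMod p)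
          (Set.range fun i : Fin g.natDegree => Sbar (Fin.castAdd f.natDegree i)))
          = g.natDegree := by
        rw [finrank_span_eq_card hli, Fintype.card_fin]
      have h2 : Submodule.span (ZMod p)
            (Set.range fun i : Fin g.natDegree => Sbar (Fin.castAdd f.natDegree i))
          ≤ Submodule.span (ZMod p) (Set.range Sbar) :=
        Submodule.span_mono (by rintro x ⟨i, rfl⟩; exact ⟨_, rfl⟩)
      have h3 : Module.finrank (ZMod p) (Submodule.span (ZMod p) (Set.range Sbar))
          = Sbar.rank := by
        rw [← Matrix.rank_transpose Sbar, Matrix.rank_eq_finrank_span_cols]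
        rfl
      calc _ = _ := h1.symm
        _ ≤ _ := Submodule.finrank_mono h2
        _ = Sbar.rank := h3
    have hrankdiag : (Matrix.diagonal fun i => φ (snf.a i)).rank
        = Fintype.card {i // φ (snf.a i) ≠ 0} := Matrix.rank_diagonal _
    have hcard2 : Fintype.card {i // φ (snf.a i) ≠ 0}
        = (Finset.univ.filter fun i => ¬ ((p:ℤ) ∣ snf.a i)).card := by
      rw [Fintype.card_subtype]
      congr 1
      ext i
      simp [hφ, Ne, ZMod.intCast_zmod_eq_zero_iff_dvd]
    have htot := Finset.card_filter_add_card_filter_not (s := Finset.univ)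
      (p := fun i : Fin (g.natDegree + f.natDegree) => (p:ℤ) ∣ snf.a i)
    rw [Finset.card_univ, Fintype.card_fin] at htot
    omega

  have hcount_g : ∀ p : ℕ, p.Prime → ¬((p:ℤ) ∣ g.leadingCoeff) →
      (Finset.univ.filter fun i => (p:ℤ) ∣ snf.a i).card ≤ g.natDegree := by
    intro p hp hpl
    haveI : Fact p.Prime := ⟨hp⟩
    set φ := Int.castRingHom (ZMod p) with hφ
    set Sbar := (sylvesterMatrix f g).map ⇑φ with hSbar
    have hrankle : Sbar.rank ≤ (Matrix.diagonal fun i => φ (snf.a i)).rank := by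
      have hmap : Sbar
          = ((Matrix.of fun i i' => ((snf.bN.repr ⟨sylvesterMatrix f g i, hrow i⟩) i' : ℤ)).map ⇑φ)
            * ((Matrix.diagonal fun i => φ (snf.a i))
              * ((Matrix.of fun i' j => snf.bM (snf.f i') j).map ⇑φ)) := by
        rw [hSbar]
        conv_lhs => rw [hdecomp]
        rw [Matrix.map_mul, Matrix.map_mul, Matrix.diagonal_map (map_zero φ)]
      rw [hmap]
      exact (Matrix.rank_mul_le_right _ _).trans (Matrix.rank_mul_le_left _ _)
    have hl0 : φ g.leadingCoeff ≠ 0 := by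
      rw [hφ, Int.coe_castRingHom, Ne, ZMod.intCast_zmod_eq_zero_iff_dvd]
      exact hpl
    set B : Matrix (Fin f.natDegree) (Fin f.natDegree) (ZMod p) :=
      Matrix.of fun i j => Sbar (Fin.natAdd g.natDegree i) (Fin.castLE (Nat.le_add_left f.natDegree g.natDegree) j) with hB
    have hBtri : ∀ i j : Fin f.natDegree, j < i → B i j = 0 := by
      intro i j hji
      show φ (sylvesterMatrix f g (Fin.natAdd g.natDegree i)
        (Fin.castLE (Nat.le_add_left f.natDegree g.natDegree) j)) = 0
      rw [syl_tri_g f g _ _ (by simp) (by simpa using hji), map_zero]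
    have hBdiag : ∀ i : Fin f.natDegree, B i i = φ g.leadingCoeff := by
      intro i
      show φ (sylvesterMatrix f g (Fin.natAdd g.natDegree i)
        (Fin.castLE (Nat.le_add_left f.natDegree g.natDegree) i)) = _
      rw [syl_diag_g f g _ _ (by simp) (by simp)]
    have hBdet : B.det = (φ g.leadingCoeff) ^ f.natDegree := by
      rw [Matrix.det_of_upperTriangular (fun i j h => hBtri i j h)]
      simp [hBdiag, Finset.prod_const]
    have hli : LinearIndependent (ZMod p)
        (fun i : Fin f.natDegree => Sbar (Fin.natAdd g.natDegree i)) := by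
      rw [Fintype.linearIndependent_iff]
      intro c hc
      have hBunit : IsUnit B := by
        rw [Matrix.isUnit_iff_isUnit_det, hBdet]
        exact (isUnit_iff_ne_zero.mpr (pow_ne_zero _ hl0))
      have hvm : c ᵥ* B = 0 := by
        funext j
        have := congrFun hc (Fin.castLE (Nat.le_add_left f.natDegree g.natDegree) j)
        simpa [Matrix.vecMul, dotProduct, hB, Finset.sum_apply] using this
      have hcinj := Matrix.vecMul_injective_iff_isUnit.mpr hBunit
      have hc0 : c = 0 := hcinj (by show c ᵥ* B = 0 ᵥ* B; rw [hvm, Matrix.zero_vecMul])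
      exact fun i => congrFun hc0 i
    have hnle : f.natDegree ≤ Sbar.rank := by
      have h1 : Module.finrank (ZMod p) (Submodule.span (ZMod p)
          (Set.range fun i : Fin f.natDegree => Sbar (Fin.natAdd g.natDegree i)))
          = f.natDegree := by
        rw [finrank_span_eq_card hli, Fintype.card_fin]
      have h2 : Submodule.span (ZMod p)
            (Set.range fun i : Fin f.natDegree => Sbar (Fin.natAdd g.natDegree i))
          ≤ Submodule.span (ZMod p) (Set.range Sbar) :=
        Submodule.span_mono (by rintro x ⟨i, rfl⟩; exact ⟨_, rfl⟩)
      have h3 : Module.finrank (ZMod p) (Submodule.span (ZMod p) (Set.range Sbar))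
          = Sbar.rank := by
        rw [← Matrix.rank_transpose Sbar, Matrix.rank_eq_finrank_span_cols]
        rfl
      calc _ = _ := h1.symm
        _ ≤ _ := Submodule.finrank_mono h2
        _ = Sbar.rank := h3
    have hrankdiag : (Matrix.diagonal fun i => φ (snf.a i)).rank
        = Fintype.card {i // φ (snf.a i) ≠ 0} := Matrix.rank_diagonal _
    have hcard2 : Fintype.card {i // φ (snf.a i) ≠ 0}
        = (Finset.univ.filter fun i => ¬ ((p:ℤ) ∣ snf.a i)).card := by
      rw [Fintype.card_subtype]
      congr 1
      ext i
      simp [hφ, Ne, ZMod.intCast_zmod_eq_zero_iff_dvd]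
    have htot := Finset.card_filter_add_card_filter_not (s := Finset.univ)
      (p := fun i : Fin (g.natDegree + f.natDegree) => (p:ℤ) ∣ snf.a i)
    rw [Finset.card_univ, Fintype.card_fin] at htot
    omega

  obtain ⟨T1, h1⟩ := hdvd_f
  obtain ⟨T2, h2⟩ := hdvd_g
  refine ⟨snf.a, max T1 T2, hprod, fun i => ?_, fun i => ?_, hcount_f, hcount_g⟩
  · exact (h1 i).trans (mul_dvd_mul_right (pow_dvd_pow _ (le_max_left _ _)) r)
  · exact (h2 i).trans (mul_dvd_mul_right (pow_dvd_pow _ (le_max_right _ _)) r)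


theorem main_dvd (f g : Polynomial ℤ)
    (hf : 0 < f.natDegree) (hg : 0 < g.natDegree)
    (hcop : IsCoprime (f.map (Int.castRingHom ℚ)) (g.map (Int.castRingHom ℚ)))
    (r : ℤ) (hrpos : 0 < r)
    (hrmem : ∃ u v : Polynomial ℤ, u * f + v * g = Polynomial.C r) :
    ∃ j : ℕ, |(sylvesterMatrix f g).det| ∣
      (Int.gcd f.leadingCoeff g.leadingCoeff : ℤ) ^ j * r ^ max f.natDegree g.natDegree := by
  obtain ⟨u₀, v₀, huv⟩ := hrmem
  obtain ⟨a, T, hprod, hdf, hdg, hcf, hcg⟩ := snf_package f g hf hg hcop r u₀ v₀ huv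
  have hf0 : f ≠ 0 := ne_zero_of_natDegree_gt hf
  have hg0 : g ≠ 0 := ne_zero_of_natDegree_gt hg
  have hdet : (sylvesterMatrix f g).det ≠ 0 := det_ne_zero f g hf hg hcop
  have hK0 : (sylvesterMatrix f g).det.natAbs ≠ 0 := Int.natAbs_ne_zero.mpr hdet
  have hd0 : Int.gcd f.leadingCoeff g.leadingCoeff ≠ 0 := by
    rw [Ne, Int.gcd_eq_zero_iff]
    rintro ⟨h1, -⟩
    exact leadingCoeff_ne_zero.mpr hf0 h1
  have hrn0 : r.natAbs ≠ 0 := Int.natAbs_ne_zero.mpr hrpos.ne'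
  have ha0 : ∀ i, (a i).natAbs ≠ 0 := by
    intro i hz
    exact hK0 (hprod.trans (Finset.prod_eq_zero (Finset.mem_univ i) hz))
  refine ⟨(sylvesterMatrix f g).det.natAbs, ?_⟩
  have hrcast : r = (r.natAbs : ℤ) := (Int.natAbs_of_nonneg hrpos.le).symm
  suffices hnat : (sylvesterMatrix f g).det.natAbs ∣
      (Int.gcd f.leadingCoeff g.leadingCoeff) ^ ((sylvesterMatrix f g).det.natAbs)
      * r.natAbs ^ max f.natDegree g.natDegree by
    rw [Int.abs_eq_natAbs, hrcast]
    exact_mod_cast hnat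
  rw [← Nat.factorization_le_iff_dvd hK0
    (Nat.mul_ne_zero (pow_ne_zero _ hd0) (pow_ne_zero _ hrn0))]
  rw [Finsupp.le_def]
  intro p
  by_cases hp : p.Prime
  swap
  · simp [Nat.factorization_eq_zero_of_not_prime _ hp]
  rw [Nat.factorization_mul (pow_ne_zero _ hd0) (pow_ne_zero _ hrn0), Nat.factorization_pow,
    Nat.factorization_pow, Finsupp.add_apply, Finsupp.smul_apply, Finsupp.smul_apply,
    smul_eq_mul, smul_eq_mul]
  by_cases hpd : p ∣ Int.gcd f.leadingCoeff g.leadingCoeff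
  · have h1 : 1 ≤ (Int.gcd f.leadingCoeff g.leadingCoeff : ℕ).factorization p :=
      hp.factorization_pos_of_dvd hd0 hpd
    have h2 : ((sylvesterMatrix f g).det.natAbs).factorization p
        ≤ (sylvesterMatrix f g).det.natAbs := (Nat.factorization_lt p hK0).le
    calc ((sylvesterMatrix f g).det.natAbs).factorization p
        ≤ (sylvesterMatrix f g).det.natAbs := h2
      _ ≤ (sylvesterMatrix f g).det.natAbs
          * (Int.gcd f.leadingCoeff g.leadingCoeff : ℕ).factorization p :=
        Nat.le_mul_of_pos_right _ h1
      _ ≤ _ := Nat.le_add_right _ _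
  · have hnot : ¬ (p ∣ f.leadingCoeff.natAbs ∧ p ∣ g.leadingCoeff.natAbs) :=
      fun ⟨h1, h2⟩ => hpd (Nat.dvd_gcd h1 h2)
    have key : ∀ (L : ℤ) (Dg : ℕ), ¬ (p ∣ L.natAbs) → (∀ i, a i ∣ L ^ T * r) →
        ((Finset.univ.filter fun i => (p:ℤ) ∣ a i).card ≤ Dg) →
        ((sylvesterMatrix f g).det.natAbs).factorization p ≤ Dg * r.natAbs.factorization p := by
      intro L Dg hL hdvd hcard
      have hLn0 : L.natAbs ≠ 0 := fun h0 => hL (h0 ▸ dvd_zero p)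
      have hKfact : ((sylvesterMatrix f g).det.natAbs).factorization p
          = ∑ i, ((a i).natAbs).factorization p := by
        rw [hprod, Nat.factorization_prod (fun i _ => ha0 i), Finsupp.finset_sum_apply]
      rw [hKfact]
      have hterm : ∀ i, ((a i).natAbs).factorization p
          ≤ if (p:ℤ) ∣ a i then r.natAbs.factorization p else 0 := by
        intro i
        by_cases hpa : (p:ℤ) ∣ a i
        · rw [if_pos hpa]
          have h3 : (a i).natAbs ∣ L.natAbs ^ T * r.natAbs := by
            have := Int.natAbs_dvd_natAbs.mpr (hdvd i)
            rwa [Int.natAbs_mul, Int.natAbs_pow] at this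
          have h4 := (Nat.factorization_le_iff_dvd (ha0 i)
            (Nat.mul_ne_zero (pow_ne_zero _ hLn0) hrn0)).mpr h3
          have h5 := Finsupp.le_def.mp h4 p
          rw [Nat.factorization_mul (pow_ne_zero _ hLn0) hrn0, Nat.factorization_pow,
            Finsupp.add_apply, Finsupp.smul_apply, smul_eq_mul,
            Nat.factorization_eq_zero_of_not_dvd hL, mul_zero, zero_add] at h5
          exact h5
        · rw [if_neg hpa]
          refine le_of_eq (Nat.factorization_eq_zero_of_not_dvd ?_)
          intro hdd
          exact hpa (Int.natCast_dvd.mpr hdd)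
      calc ∑ i, ((a i).natAbs).factorization p
          ≤ ∑ i, (if (p:ℤ) ∣ a i then r.natAbs.factorization p else 0) :=
            Finset.sum_le_sum fun i _ => hterm i
        _ = (Finset.univ.filter fun i => (p:ℤ) ∣ a i).card * r.natAbs.factorization p := by
            rw [← Finset.sum_filter, Finset.sum_const, smul_eq_mul]
        _ ≤ Dg * r.natAbs.factorization p := Nat.mul_le_mul_right _ hcard
    rw [Nat.factorization_eq_zero_of_not_dvd hpd, mul_zero, zero_add]
    rcases not_and_or.mp hnot with h | h
    · exact (key f.leadingCoeff f.natDegree h hdf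
        (hcf p hp (fun hh => h (Int.natCast_dvd.mp hh)))).trans
        (Nat.mul_le_mul_right _ (le_max_left _ _))
    · exact (key g.leadingCoeff g.natDegree h hdg
        (hcg p hp (fun hh => h (Int.natCast_dvd.mp hh)))).trans
        (Nat.mul_le_mul_right _ (le_max_right _ _))

end Statement9Aux

theorem statement_9 (f g : Polynomial ℤ)
    (hf : 0 < f.natDegree) (hg : 0 < g.natDegree)
    (hcop : IsCoprime (f.map (Int.castRingHom ℚ)) (g.map (Int.castRingHom ℚ)))
    (r : ℤ) (hrpos : 0 < r)
    (hrmem : ∃ u v : Polynomial ℤ, u * f + v * g = Polynomial.C r)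
    (hrmin : ∀ s : ℤ, 0 < s →
      (∃ u v : Polynomial ℤ, u * f + v * g = Polynomial.C s) → r ≤ s) :
    ∃ j : ℕ,
      |res f g| ∣ (Int.gcd f.leadingCoeff g.leadingCoeff : ℤ) ^ j * r ^ max f.natDegree g.natDegree :=
  Statement9Aux.main_dvd f g hf hg hcop r hrpos hrmem
end

section
/- Let f and g be monic coprime integer polynomials of positive degree, with deg(f) = m and deg(g) = n. Then |Res(f,g)| divides r(f,g)^{min(m,n)}. -/
open Polynomial

lemma coeff_xpow_mul (p : Polynomial ℤ) (k d : ℕ) :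
    (X ^ k * p).coeff d = if k ≤ d then p.coeff (d - k) else 0 := by
  rw [mul_comm, coeff_mul_X_pow']

lemma sylvester_row_top (f g : Polynomial ℤ)
    (i j : Fin (g.natDegree + f.natDegree)) (hi : (i : ℕ) < g.natDegree) :
    sylvesterMatrix f g i j
      = (X ^ (g.natDegree - 1 - (i : ℕ)) * f).coeff
          (f.natDegree + g.natDegree - 1 - (j : ℕ)) := by
  have hj := j.isLt
  unfold sylvesterMatrix
  rw [Matrix.of_apply, if_pos hi, coeff_xpow_mul]
  split_ifs with h1 h2 h2
  · congr 1; omega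
  · exfalso; omega
  · symm; apply coeff_eq_zero_of_natDegree_lt; omega
  · rfl

lemma sylvester_row_bot (f g : Polynomial ℤ)
    (i j : Fin (g.natDegree + f.natDegree)) (hi : g.natDegree ≤ (i : ℕ)) :
    sylvesterMatrix f g i j
      = (X ^ (f.natDegree - 1 - ((i : ℕ) - g.natDegree)) * g).coeff
          (f.natDegree + g.natDegree - 1 - (j : ℕ)) := by
  have hj := j.isLt
  have hi2 := i.isLt
  unfold sylvesterMatrix
  rw [Matrix.of_apply, if_neg (by omega), coeff_xpow_mul]
  split_ifs with h1 h2 h2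
  · congr 1; omega
  · exfalso; omega
  · symm; apply coeff_eq_zero_of_natDegree_lt; omega
  · rfl

lemma mul_coeff_expand (f q : Polynomial ℤ) (n d : ℕ) (hq : q.natDegree < n) :
    (f * q).coeff d = ∑ k ∈ Finset.range n, q.coeff k * (X ^ k * f).coeff d := by
  rw [mul_comm]
  nth_rewrite 1 [as_sum_range' q n hq]
  rw [Finset.sum_mul, finset_sum_coeff]
  exact Finset.sum_congr rfl fun k _ => by
    rw [← C_mul_X_pow_eq_monomial, mul_assoc, coeff_C_mul]

lemma det_sylvester_eq (f g : Polynomial ℤ) (hf : f.Monic)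
    (hm : 0 < f.natDegree) (hn : 0 < g.natDegree) :
    (sylvesterMatrix f g).det
      = (Algebra.leftMulMatrix (AdjoinRoot.powerBasis' hf).basis
          (AdjoinRoot.mk f g)).det := by
  have hf1 : f ≠ 1 := by intro h; rw [h, natDegree_one] at hm; omega
  have hmod : ∀ p : Polynomial ℤ, (p %ₘ f).natDegree < f.natDegree :=
    fun p => natDegree_modByMonic_lt p hf hf1
  have hel : ∀ k : Fin g.natDegree,
      ((finSumFinEquiv (Sum.inl k) : Fin (g.natDegree + f.natDegree)) : ℕ) = (k : ℕ) := by
    simp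
  have her : ∀ k : Fin f.natDegree,
      ((finSumFinEquiv (Sum.inr k) : Fin (g.natDegree + f.natDegree)) : ℕ)
        = g.natDegree + (k : ℕ) := by
    simp
  set K : Matrix (Fin f.natDegree) (Fin g.natDegree) ℤ :=
    fun i k => ((X ^ (f.natDegree - 1 - (i : ℕ)) * g) /ₘ f).coeff
      (g.natDegree - 1 - (k : ℕ)) with hK
  set A : Matrix (Fin g.natDegree) (Fin g.natDegree) ℤ :=
    fun i j => sylvesterMatrix f g (finSumFinEquiv (Sum.inl i))
      (finSumFinEquiv (Sum.inl j)) with hA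
  set B : Matrix (Fin g.natDegree) (Fin f.natDegree) ℤ :=
    fun i j => sylvesterMatrix f g (finSumFinEquiv (Sum.inl i))
      (finSumFinEquiv (Sum.inr j)) with hB
  set Cm : Matrix (Fin f.natDegree) (Fin f.natDegree) ℤ :=
    fun i j => ((X ^ (f.natDegree - 1 - (i : ℕ)) * g) %ₘ f).coeff
      (f.natDegree - 1 - (j : ℕ)) with hCm
  -- key row identity
  have hrow : ∀ (i : Fin f.natDegree) (j : Fin (g.natDegree + f.natDegree)),
      sylvesterMatrix f g (finSumFinEquiv (Sum.inr i)) j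
        = (∑ k : Fin g.natDegree, K i k
            * sylvesterMatrix f g (finSumFinEquiv (Sum.inl k)) j)
          + ((X ^ (f.natDegree - 1 - (i : ℕ)) * g) %ₘ f).coeff
              (f.natDegree + g.natDegree - 1 - (j : ℕ)) := by
    intro i j
    have hq : ((X ^ (f.natDegree - 1 - (i : ℕ)) * g) /ₘ f).natDegree < g.natDegree := by
      have h1 : (X ^ (f.natDegree - 1 - (i : ℕ)) * g).natDegree
          ≤ (f.natDegree - 1 - (i : ℕ)) + g.natDegree := by
        refine le_trans (natDegree_mul_le) ?_
        simp [natDegree_X_pow]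
      have h2 := natDegree_divByMonic (X ^ (f.natDegree - 1 - (i : ℕ)) * g) hf
      omega
    have hLHS : sylvesterMatrix f g (finSumFinEquiv (Sum.inr i)) j
        = (X ^ (f.natDegree - 1 - (i : ℕ)) * g).coeff
            (f.natDegree + g.natDegree - 1 - (j : ℕ)) := by
      rw [sylvester_row_bot f g _ j (by rw [her]; omega)]
      congr 3
      rw [her]
      omega
    have hrev : ∀ k : Fin g.natDegree, ((Fin.rev k : Fin g.natDegree) : ℕ)
        = g.natDegree - 1 - (k : ℕ) := fun k => by rw [Fin.val_rev]; omega
    rw [hLHS]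
    conv_lhs => rw [← modByMonic_add_div (X ^ (f.natDegree - 1 - (i : ℕ)) * g) f]
    rw [coeff_add, mul_coeff_expand f _ g.natDegree _ hq]
    have h1 : (∑ k : Fin g.natDegree, K i k
          * sylvesterMatrix f g (finSumFinEquiv (Sum.inl k)) j)
        = ∑ k : Fin g.natDegree,
            ((X ^ (f.natDegree - 1 - (i : ℕ)) * g) /ₘ f).coeff (k : ℕ)
              * (X ^ (k : ℕ) * f).coeff (f.natDegree + g.natDegree - 1 - (j : ℕ)) := by
      refine Fintype.sum_equiv Fin.revPerm _ _ fun k => ?_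
      simp only [Fin.revPerm_apply]
      rw [sylvester_row_top f g _ j (by rw [hel]; exact k.isLt), hel k, hrev k]
    have hsum : (∑ k : Fin g.natDegree, K i k
          * sylvesterMatrix f g (finSumFinEquiv (Sum.inl k)) j)
        = ∑ k ∈ Finset.range g.natDegree,
            ((X ^ (f.natDegree - 1 - (i : ℕ)) * g) /ₘ f).coeff k
              * (X ^ k * f).coeff (f.natDegree + g.natDegree - 1 - (j : ℕ)) :=
      h1.trans (Fin.sum_univ_eq_sum_range (fun t =>
        ((X ^ (f.natDegree - 1 - (i : ℕ)) * g) /ₘ f).coeff t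
          * (X ^ t * f).coeff (f.natDegree + g.natDegree - 1 - (j : ℕ))) g.natDegree)
    rw [hsum]
    ring
  -- factorization
  have hmat : (sylvesterMatrix f g).submatrix finSumFinEquiv finSumFinEquiv
      = Matrix.fromBlocks 1 0 K 1 * Matrix.fromBlocks A B 0 Cm := by
    rw [Matrix.fromBlocks_multiply]
    simp only [Matrix.one_mul, Matrix.mul_one, Matrix.zero_mul, Matrix.mul_zero,
      add_zero, zero_add]
    ext i j
    cases i with
    | inl i =>
      cases j with
      | inl j => rfl
      | inr j => rfl
    | inr i =>
      cases j with
      | inl j =>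
        rw [Matrix.submatrix_apply, Matrix.fromBlocks_apply₂₁,
          hrow i (finSumFinEquiv (Sum.inl j)), Matrix.mul_apply]
        have hz : ((X ^ (f.natDegree - 1 - (i : ℕ)) * g) %ₘ f).coeff
            (f.natDegree + g.natDegree - 1
              - ((finSumFinEquiv (Sum.inl j) : Fin (g.natDegree + f.natDegree)) : ℕ)) = 0 := by
          apply coeff_eq_zero_of_natDegree_lt
          have h1 := hmod (X ^ (f.natDegree - 1 - (i : ℕ)) * g)
          have h2 := hel j
          have h3 := j.isLt
          omega
        rw [hz, add_zero]
      | inr j =>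
        rw [Matrix.submatrix_apply, Matrix.fromBlocks_apply₂₂,
          hrow i (finSumFinEquiv (Sum.inr j)), Matrix.add_apply, Matrix.mul_apply]
        congr 1
        have h2 := her j
        have h3 := j.isLt
        congr 1
        omega
  -- determinants
  have hdet1 : (sylvesterMatrix f g).det = A.det * Cm.det := by
    rw [← Matrix.det_submatrix_equiv_self finSumFinEquiv (sylvesterMatrix f g), hmat,
      Matrix.det_mul, Matrix.det_fromBlocks_zero₁₂, Matrix.det_fromBlocks_zero₂₁]
    simp
  have hAdet : A.det = 1 := by
    have ht : A.BlockTriangular id := by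
      intro a b hab
      have hab' : (b : ℕ) < (a : ℕ) := hab
      have h1 := hel a
      have h2 := hel b
      have h3 := a.isLt
      have h4 := b.isLt
      show sylvesterMatrix f g (finSumFinEquiv (Sum.inl a)) (finSumFinEquiv (Sum.inl b)) = 0
      rw [sylvester_row_top f g _ _ (by omega), coeff_xpow_mul, if_pos (by omega)]
      apply coeff_eq_zero_of_natDegree_lt
      omega
    rw [Matrix.det_of_upperTriangular ht]
    refine Finset.prod_eq_one fun a _ => ?_
    have h1 := hel a
    have h2 := a.isLt
    show sylvesterMatrix f g (finSumFinEquiv (Sum.inl a)) (finSumFinEquiv (Sum.inl a)) = 1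
    rw [sylvester_row_top f g _ _ (by omega), coeff_xpow_mul, if_pos (by omega)]
    have h3 : f.natDegree + g.natDegree - 1
          - ((finSumFinEquiv (Sum.inl a) : Fin (g.natDegree + f.natDegree)) : ℕ)
          - (g.natDegree - 1
              - ((finSumFinEquiv (Sum.inl a) : Fin (g.natDegree + f.natDegree)) : ℕ))
        = f.natDegree := by omega
    rw [h3]
    exact hf.coeff_natDegree
  have hrev2 : ∀ k : Fin f.natDegree, ((Fin.rev k : Fin f.natDegree) : ℕ)
      = f.natDegree - 1 - (k : ℕ) := fun k => by rw [Fin.val_rev]; omega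
  have hM : ∀ a b : Fin f.natDegree,
      Algebra.leftMulMatrix (AdjoinRoot.powerBasis' hf).basis (AdjoinRoot.mk f g) a b
        = ((g * X ^ (b : ℕ)) %ₘ f).coeff (a : ℕ) := by
    intro a b
    refine (Algebra.leftMulMatrix_eq_repr_mul _ _ a b).trans ?_
    have hb : (AdjoinRoot.powerBasis' hf).basis b = AdjoinRoot.mk f (X ^ (b : ℕ)) := by
      erw [PowerBasis.basis_eq_pow, AdjoinRoot.powerBasis'_gen, ← AdjoinRoot.mk_X,
        ← map_pow]
    erw [hb, ← map_mul]
    rfl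
  have hCdet : Cm.det
      = (Algebra.leftMulMatrix (AdjoinRoot.powerBasis' hf).basis (AdjoinRoot.mk f g)).det := by
    have hCeq : Cm = ((Algebra.leftMulMatrix (AdjoinRoot.powerBasis' hf).basis
        (AdjoinRoot.mk f g)).transpose).submatrix Fin.revPerm Fin.revPerm := by
      ext a b
      refine Eq.trans ?_ (hM _ _).symm
      show ((X ^ (f.natDegree - 1 - (a : ℕ)) * g) %ₘ f).coeff (f.natDegree - 1 - (b : ℕ)) = _
      show _ = ((g * X ^ ((Fin.rev a : Fin f.natDegree) : ℕ)) %ₘ f).coeff ((Fin.rev b : Fin f.natDegree) : ℕ)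
      rw [hrev2 a, hrev2 b, mul_comm g]
    rw [hCeq]
    exact (Matrix.det_submatrix_equiv_self Fin.revPerm _).trans (Matrix.det_transpose _)
  rw [hdet1, hAdet, hCdet, one_mul]

lemma det_dvd (f g u v : Polynomial ℤ) (hf : f.Monic)
    (hm : 0 < f.natDegree) (hn : 0 < g.natDegree) (r : ℤ)
    (h : u * f + v * g = C r) :
    (sylvesterMatrix f g).det ∣ r ^ f.natDegree := by
  rw [det_sylvester_eq f g hf hm hn]
  have hmul : AdjoinRoot.mk f g * AdjoinRoot.mk f v = r • 1 := by
    rw [← map_mul]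
    have h2 : AdjoinRoot.mk f (g * v) = AdjoinRoot.mk f (C r) := by
      rw [← h, map_add, map_mul, map_mul, AdjoinRoot.mk_self, mul_zero, zero_add,
        ← map_mul, mul_comm]
    rw [h2, zsmul_one]
    exact_mod_cast map_intCast (AdjoinRoot.mk f) r
  have hkey : (Algebra.leftMulMatrix (AdjoinRoot.powerBasis' hf).basis
        (AdjoinRoot.mk f g)).det
      * (Algebra.leftMulMatrix (AdjoinRoot.powerBasis' hf).basis
        (AdjoinRoot.mk f v)).det = r ^ f.natDegree := by
    rw [← Matrix.det_mul, ← map_mul, hmul, map_smul, map_one, Matrix.det_smul,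
      Matrix.det_one, mul_one, Fintype.card_fin]
    rfl
  exact ⟨_, hkey.symm⟩

lemma abs_det_swap (f g : Polynomial ℤ) (hm : 0 < f.natDegree) (hn : 0 < g.natDegree) :
    |(sylvesterMatrix g f).det| = |(sylvesterMatrix f g).det| := by
  haveI : NeZero (g.natDegree + f.natDegree) := ⟨by omega⟩
  set κ : Fin (f.natDegree + g.natDegree) ≃ Fin (g.natDegree + f.natDegree) :=
    finCongr (add_comm f.natDegree g.natDegree) with hκ
  set σ : Fin (f.natDegree + g.natDegree) ≃ Fin (g.natDegree + f.natDegree) :=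
    κ.trans (Equiv.addRight (⟨g.natDegree, by omega⟩ : Fin (g.natDegree + f.natDegree)))
    with hσ
  have hσv : ∀ i : Fin (f.natDegree + g.natDegree),
      ((σ i : Fin (g.natDegree + f.natDegree)) : ℕ)
        = ((i : ℕ) + g.natDegree) % (g.natDegree + f.natDegree) := by
    intro i; simp [hσ, hκ, Fin.add_def]
  have hsub : sylvesterMatrix g f = (sylvesterMatrix f g).submatrix σ κ := by
    ext i j
    rw [Matrix.submatrix_apply]
    have hκv : ((κ j : Fin (g.natDegree + f.natDegree)) : ℕ) = (j : ℕ) := by simp [hκ]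
    have hv := hσv i
    have hi := i.isLt
    have hj := j.isLt
    have hs := (σ i).isLt
    rcases lt_or_ge (i : ℕ) f.natDegree with hc | hc
    · have hval : ((σ i : Fin (g.natDegree + f.natDegree)) : ℕ)
          = (i : ℕ) + g.natDegree := by
        rw [hv, Nat.mod_eq_of_lt (by omega)]
      unfold sylvesterMatrix
      rw [Matrix.of_apply, Matrix.of_apply]
      split_ifs <;> first | rfl | (exfalso; omega) | (congr 1; omega)
    · have hval : ((σ i : Fin (g.natDegree + f.natDegree)) : ℕ)
          = (i : ℕ) - f.natDegree := by
        rw [hv, show (i : ℕ) + g.natDegree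
            = (g.natDegree + f.natDegree) + ((i : ℕ) - f.natDegree) from by omega,
          Nat.add_mod_left, Nat.mod_eq_of_lt (by omega)]
      unfold sylvesterMatrix
      rw [Matrix.of_apply, Matrix.of_apply]
      split_ifs <;> first | rfl | (exfalso; omega) | (congr 1; omega)
  have h2 : (sylvesterMatrix f g).submatrix σ κ
      = ((sylvesterMatrix f g).submatrix κ κ).submatrix (σ.trans κ.symm) id := by
    ext i j
    simp [Matrix.submatrix_apply]
  have h3 := Matrix.det_permute (σ.trans κ.symm)
    ((sylvesterMatrix f g).submatrix κ κ)
  have h4 := Matrix.det_submatrix_equiv_self κ (sylvesterMatrix f g)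
  rw [hsub, h2, h3, h4, abs_mul]
  rcases Int.units_eq_one_or (Equiv.Perm.sign (σ.trans κ.symm)) with h5 | h5 <;>
    rw [h5] <;> simp

theorem statement_10 (f g : Polynomial ℤ)
    (hf : 0 < f.natDegree) (hg : 0 < g.natDegree)
    (hcop : IsCoprime (f.map (Int.castRingHom ℚ)) (g.map (Int.castRingHom ℚ)))
    (hfm : f.Monic) (hgm : g.Monic)
    (r : ℤ) (hrpos : 0 < r)
    (hrmem : ∃ u v : Polynomial ℤ, u * f + v * g = Polynomial.C r)
    (hrmin : ∀ s : ℤ, 0 < s →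
      (∃ u v : Polynomial ℤ, u * f + v * g = Polynomial.C s) → r ≤ s) :
    |res f g| ∣ r ^ min f.natDegree g.natDegree := by
  obtain ⟨u, v, huv⟩ := hrmem
  have h1 : (sylvesterMatrix f g).det ∣ r ^ f.natDegree :=
    det_dvd f g u v hfm hf hg r huv
  have h2 : (sylvesterMatrix g f).det ∣ r ^ g.natDegree :=
    det_dvd g f v u hgm hg hf r (by linear_combination huv)
  have h3 := abs_det_swap f g hf hg
  have hres : res f g = (sylvesterMatrix f g).det := rfl
  rcases le_total f.natDegree g.natDegree with h | h
  · rw [min_eq_left h, hres]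
    exact (abs_dvd _ _).mpr h1
  · rw [min_eq_right h, hres, ← h3]
    exact (abs_dvd _ _).mpr h2
end

section
/- Let f and g be coprime integer polynomials of positive degree with f monic and deg(f) = m. Then |Res(f,g)| divides r(f,g)^m. -/
open Polynomial

lemma aux_coeff_X_pow_mul' (p : Polynomial ℤ) (s t : ℕ) :
    (X ^ s * p).coeff t = if s ≤ t then p.coeff (t - s) else 0 := by
  rw [mul_comm, Polynomial.coeff_mul_X_pow']

lemma aux_sum_coeff_mul (q p : Polynomial ℤ) (n : ℕ) (hq : q.natDegree < n) (t : ℕ) :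
    ∑ s ∈ Finset.range n, q.coeff s * (X ^ s * p).coeff t = (q * p).coeff t := by
  conv_rhs => rw [q.as_sum_range' n hq]
  rw [Finset.sum_mul, finset_sum_coeff]
  refine Finset.sum_congr rfl fun s _ => ?_
  rw [← C_mul_X_pow_eq_monomial, mul_assoc, coeff_C_mul]

lemma aux_key (f g : Polynomial ℤ) (hfm : f.Monic) (hgne : g ≠ 0)
    (hg : 0 < g.natDegree) (i : ℕ) (hi : i < f.natDegree) (t : ℕ) :
    ((X ^ i * g) %ₘ f).coeff t
      + ∑ s ∈ Finset.range g.natDegree,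
          ((X ^ i * g) /ₘ f).coeff s * (X ^ s * f).coeff t
      = (X ^ i * g).coeff t := by
  have hdeg : ((X ^ i * g) /ₘ f).natDegree < g.natDegree := by
    rw [natDegree_divByMonic _ hfm, natDegree_mul (pow_ne_zero i X_ne_zero) hgne,
      natDegree_X_pow]
    omega
  rw [aux_sum_coeff_mul _ _ _ hdeg, ← Polynomial.coeff_add, mul_comm ((X ^ i * g) /ₘ f) f,
    Polynomial.modByMonic_add_div _ f]

noncomputable def sylG1 (f g : Polynomial ℤ) : Matrix (Fin f.natDegree) (Fin f.natDegree) ℤ :=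
  fun i j => (X ^ (i : ℕ) * g).coeff (j : ℕ)
noncomputable def sylG2 (f g : Polynomial ℤ) : Matrix (Fin f.natDegree) (Fin g.natDegree) ℤ :=
  fun i j => (X ^ (i : ℕ) * g).coeff (f.natDegree + (j : ℕ))
noncomputable def sylF1 (f g : Polynomial ℤ) : Matrix (Fin g.natDegree) (Fin f.natDegree) ℤ :=
  fun s j => (X ^ (s : ℕ) * f).coeff (j : ℕ)
noncomputable def sylF2 (f g : Polynomial ℤ) : Matrix (Fin g.natDegree) (Fin g.natDegree) ℤ :=
  fun s j => (X ^ (s : ℕ) * f).coeff (f.natDegree + (j : ℕ))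
noncomputable def sylQ (f g : Polynomial ℤ) : Matrix (Fin f.natDegree) (Fin g.natDegree) ℤ :=
  fun i s => ((X ^ (i : ℕ) * g) /ₘ f).coeff (s : ℕ)
noncomputable def sylM (f g : Polynomial ℤ) : Matrix (Fin f.natDegree) (Fin f.natDegree) ℤ :=
  fun i j => ((X ^ (i : ℕ) * g) %ₘ f).coeff (j : ℕ)

theorem res_eq_norm (f g : Polynomial ℤ) (hfm : f.Monic) (hf : 0 < f.natDegree)
    (hg : 0 < g.natDegree) :
    res f g = Algebra.norm ℤ (AdjoinRoot.mk f g) := by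
  have hgne : g ≠ 0 := fun h => by simp [h] at hg
  let e : Fin f.natDegree ⊕ Fin g.natDegree ≃ Fin (g.natDegree + f.natDegree) :=
    (finSumFinEquiv.trans (finCongr (Nat.add_comm f.natDegree g.natDegree))).trans Fin.revPerm
  have he_l : ∀ i : Fin f.natDegree,
      ((e (Sum.inl i)) : ℕ) = g.natDegree + f.natDegree - 1 - (i : ℕ) := by
    intro i
    simp [e, Fin.val_rev]
    omega
  have he_r : ∀ s : Fin g.natDegree, ((e (Sum.inr s)) : ℕ) = g.natDegree - 1 - (s : ℕ) := by
    intro s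
    have := s.isLt
    simp [e, Fin.val_rev]
    omega
  have hblocks : (sylvesterMatrix f g).submatrix e e
      = Matrix.fromBlocks (sylG1 f g) (sylG2 f g) (sylF1 f g) (sylF2 f g) := by
    ext a c
    cases a with
    | inl i =>
      cases c with
      | inl j =>
        have hi := i.isLt; have hj := j.isLt
        simp only [Matrix.submatrix_apply, Matrix.fromBlocks_apply₁₁, sylvesterMatrix,
          Matrix.of_apply, he_l, sylG1, aux_coeff_X_pow_mul']
        rw [if_neg (by omega)]
        split_ifs with h1 h2 h2
        · congr 1; omega
        · omega
        · exact (coeff_eq_zero_of_natDegree_lt (by omega)).symm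
        · rfl
      | inr j =>
        have hi := i.isLt; have hj := j.isLt
        simp only [Matrix.submatrix_apply, Matrix.fromBlocks_apply₁₂, sylvesterMatrix,
          Matrix.of_apply, he_l, he_r, sylG2, aux_coeff_X_pow_mul']
        rw [if_neg (by omega)]
        split_ifs with h1 h2 h2
        · congr 1; omega
        · omega
        · exact (coeff_eq_zero_of_natDegree_lt (by omega)).symm
        · rfl
    | inr s =>
      cases c with
      | inl j =>
        have hs := s.isLt; have hj := j.isLt
        simp only [Matrix.submatrix_apply, Matrix.fromBlocks_apply₂₁, sylvesterMatrix,
          Matrix.of_apply, he_l, he_r, sylF1, aux_coeff_X_pow_mul']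
        rw [if_pos (by omega)]
        split_ifs with h1 h2 h2
        · congr 1; omega
        · omega
        · exact (coeff_eq_zero_of_natDegree_lt (by omega)).symm
        · rfl
      | inr j =>
        have hs := s.isLt; have hj := j.isLt
        simp only [Matrix.submatrix_apply, Matrix.fromBlocks_apply₂₂, sylvesterMatrix,
          Matrix.of_apply, he_r, sylF2, aux_coeff_X_pow_mul']
        rw [if_pos (by omega)]
        split_ifs with h1 h2 h2
        · congr 1; omega
        · omega
        · exact (coeff_eq_zero_of_natDegree_lt (by omega)).symm
        · rfl
  have hrem0 : ∀ (i : Fin f.natDegree) (t : ℕ), f.natDegree ≤ t →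
      ((X ^ (i : ℕ) * g) %ₘ f).coeff t = 0 := by
    intro i t ht
    refine coeff_eq_zero_of_degree_lt (lt_of_lt_of_le (degree_modByMonic_lt _ hfm) ?_)
    rw [degree_eq_natDegree hfm.ne_zero]
    exact_mod_cast Nat.cast_le.mpr ht
  have hkey : ∀ (i : Fin f.natDegree) (t : ℕ),
      ((X ^ (i : ℕ) * g) %ₘ f).coeff t
        + ∑ s : Fin g.natDegree, ((X ^ (i : ℕ) * g) /ₘ f).coeff (s : ℕ) * (X ^ (s : ℕ) * f).coeff t
        = (X ^ (i : ℕ) * g).coeff t := by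
    intro i t
    have h := aux_key f g hfm hgne hg i i.isLt t
    rw [← Fin.sum_univ_eq_sum_range] at h
    exact h
  have hfact : Matrix.fromBlocks (sylG1 f g) (sylG2 f g) (sylF1 f g) (sylF2 f g)
      = Matrix.fromBlocks 1 (sylQ f g) 0 1
        * Matrix.fromBlocks (sylM f g) 0 (sylF1 f g) (sylF2 f g) := by
    rw [Matrix.fromBlocks_multiply]
    simp only [Matrix.one_mul, Matrix.zero_mul, Matrix.mul_zero, Matrix.mul_one,
      zero_add, add_zero]
    have hA : sylG1 f g = sylM f g + sylQ f g * sylF1 f g := by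
      ext i j
      rw [Matrix.add_apply, Matrix.mul_apply]
      exact (hkey i j).symm
    have hB : sylG2 f g = sylQ f g * sylF2 f g := by
      ext i j
      rw [Matrix.mul_apply]
      have h := hkey i (f.natDegree + (j : ℕ))
      rw [hrem0 i _ (Nat.le_add_right _ _), zero_add] at h
      exact h.symm
    rw [hA, hB]
  have hdetF2 : (sylF2 f g).det = 1 := by
    have htri : (sylF2 f g).BlockTriangular OrderDual.toDual := by
      intro s j h
      have hs := s.isLt; have hj := j.isLt
      have hlt : (s : ℕ) < (j : ℕ) := h
      simp only [sylF2]
      rw [aux_coeff_X_pow_mul']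
      split_ifs with h1
      · exact coeff_eq_zero_of_natDegree_lt (by omega)
      · rfl
    rw [Matrix.det_of_lowerTriangular _ htri]
    have hdiag : ∀ s : Fin g.natDegree, sylF2 f g s s = 1 := by
      intro s
      simp only [sylF2]
      rw [aux_coeff_X_pow_mul', if_pos (by omega)]
      have h2 : f.natDegree + (s : ℕ) - (s : ℕ) = f.natDegree := by omega
      rw [h2]
      exact hfm.coeff_natDegree
    simp [hdiag]
  have hdet : (sylvesterMatrix f g).det = (sylM f g).det := by
    rw [← Matrix.det_submatrix_equiv_self e, hblocks, hfact, Matrix.det_mul,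
      Matrix.det_fromBlocks_zero₂₁, Matrix.det_fromBlocks_zero₁₂, hdetF2]
    simp
  let b : Module.Basis (Fin f.natDegree) ℤ (AdjoinRoot f) := AdjoinRoot.powerBasisAux' hfm
  have hMg : sylM f g = (Algebra.leftMulMatrix b (AdjoinRoot.mk f g)).transpose := by
    ext i j
    rw [Matrix.transpose_apply, Algebra.leftMulMatrix_eq_repr_mul]
    have hbi : b i = AdjoinRoot.mk f (X ^ (i : ℕ)) := by
      have h := (AdjoinRoot.powerBasis' hfm).basis_eq_pow i
      rw [AdjoinRoot.powerBasis'_gen] at h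
      rw [map_pow, AdjoinRoot.mk_X]
      exact h
    rw [hbi, ← map_mul, mul_comm g (X ^ (i : ℕ))]
    simp only [sylM, b, AdjoinRoot.powerBasisAux'_repr_apply_to_fun,
      AdjoinRoot.modByMonicHom_mk]
  show (sylvesterMatrix f g).det = _
  rw [hdet, hMg, Matrix.det_transpose, Algebra.norm_eq_matrix_det b]

theorem statement_11 (f g : Polynomial ℤ)
    (hf : 0 < f.natDegree) (hg : 0 < g.natDegree)
    (hcop : IsCoprime (f.map (Int.castRingHom ℚ)) (g.map (Int.castRingHom ℚ)))
    (hfm : f.Monic)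
    (r : ℤ) (hrpos : 0 < r)
    (hrmem : ∃ u v : Polynomial ℤ, u * f + v * g = Polynomial.C r)
    (hrmin : ∀ s : ℤ, 0 < s →
      (∃ u v : Polynomial ℤ, u * f + v * g = Polynomial.C s) → r ≤ s) :
    |res f g| ∣ r ^ f.natDegree := by
  obtain ⟨u, v, huv⟩ := hrmem
  let b : Module.Basis (Fin f.natDegree) ℤ (AdjoinRoot f) := AdjoinRoot.powerBasisAux' hfm
  have h1 : AdjoinRoot.mk f (C r) = AdjoinRoot.mk f v * AdjoinRoot.mk f g := by
    rw [← huv, map_add, map_mul, map_mul, AdjoinRoot.mk_self, mul_zero, zero_add]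
  have h2 : Algebra.norm ℤ (AdjoinRoot.mk f (C r)) = r ^ f.natDegree := by
    have hc : AdjoinRoot.mk f (C r) = algebraMap ℤ (AdjoinRoot f) r := by
      rw [AdjoinRoot.algebraMap_eq]
      rfl
    rw [hc, Algebra.norm_algebraMap_of_basis b, Fintype.card_fin]
  have h3 : Algebra.norm ℤ (AdjoinRoot.mk f g) ∣ r ^ f.natDegree := by
    rw [← h2, h1, map_mul]
    exact dvd_mul_left _ _
  rw [res_eq_norm f g hfm hf hg, abs_dvd]
  exact h3
end

section
/- Let f and g be coprime integer polynomials of positive degree and d = gcd(L(f), L(g)). Then a prime p divides |Res(f,g)| if and only if p divides d·r(f,g). -/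
open Polynomial Finset

lemma row_sum {R : Type*} [CommRing R] (h : R[X]) (n a N : ℕ)
    (hn : h.natDegree ≤ n) (ha : a + n < N) :
    ∑ j ∈ Finset.range N,
      (if a ≤ j ∧ j ≤ a + n then C (h.coeff (n + a - j)) else 0) * X ^ (N - 1 - j)
      = X ^ (N - 1 - a - n) * h := by
  have hsum : ∑ j ∈ Finset.range N,
      (if a ≤ j ∧ j ≤ a + n then C (h.coeff (n + a - j)) else 0) * X ^ (N - 1 - j)
      = ∑ j ∈ Finset.Ico a (a + n + 1),
      (if a ≤ j ∧ j ≤ a + n then C (h.coeff (n + a - j)) else 0) * X ^ (N - 1 - j) := by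
    refine (Finset.sum_subset ?_ ?_).symm
    · intro x hx; simp only [Finset.mem_Ico] at hx; exact Finset.mem_range.2 (by omega)
    · intro x hx hx'
      simp only [Finset.mem_Ico, not_and, not_lt] at hx'
      rw [if_neg (by omega), zero_mul]
  rw [hsum, Finset.sum_Ico_eq_sum_range]
  have h2 : a + n + 1 - a = n + 1 := by omega
  rw [h2]
  conv_rhs => rw [h.as_sum_range' (n+1) (by omega), Finset.mul_sum,
    ← Finset.sum_range_reflect]
  refine Finset.sum_congr rfl fun t ht => ?_
  simp only [Finset.mem_range] at ht
  rw [if_pos (by omega)]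
  have e1 : n + a - (a + t) = n - t := by omega
  have e2 : n + 1 - 1 - t = n - t := by omega
  rw [e1, e2, C_mul_X_pow_eq_monomial, X_pow_eq_monomial, monomial_mul_monomial, one_mul]
  have e4 : N - 1 - (a + t) = N - 1 - a - n + (n - t) := by omega
  rw [e4]

lemma sylvester_row {R : Type*} [CommRing R] (φ : ℤ →+* R) (f g : Polynomial ℤ)
    (hf : 0 < f.natDegree) (hg : 0 < g.natDegree)
    (i : Fin (g.natDegree + f.natDegree)) :
    ∑ j : Fin (g.natDegree + f.natDegree),
      C (φ (sylvesterMatrix f g i j)) * X ^ (g.natDegree + f.natDegree - 1 - (j : ℕ)) =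
    if (i : ℕ) < g.natDegree then
      X ^ (g.natDegree + f.natDegree - 1 - (i : ℕ) - f.natDegree) * (f.map φ)
    else
      X ^ (g.natDegree + f.natDegree - 1 - ((i : ℕ) - g.natDegree) - g.natDegree) * (g.map φ) := by
  have hi := i.isLt
  simp only [sylvesterMatrix, Matrix.of_apply]
  rw [Fin.sum_univ_eq_sum_range (fun j =>
    C (φ (if (i : ℕ) < g.natDegree then
      if (i : ℕ) ≤ j ∧ j ≤ (i : ℕ) + f.natDegree then
        f.coeff (f.natDegree + i - j) else 0
    else
      if (i : ℕ) - g.natDegree ≤ j ∧ j ≤ (i : ℕ) - g.natDegree + g.natDegree then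
        g.coeff (g.natDegree + ((i : ℕ) - g.natDegree) - j) else 0))
      * X ^ (g.natDegree + f.natDegree - 1 - j))]
  by_cases hlt : (i : ℕ) < g.natDegree
  · rw [if_pos hlt]
    have := row_sum (f.map φ) f.natDegree (i : ℕ) (g.natDegree + f.natDegree)
      f.natDegree_map_le (by omega)
    rw [← this]
    refine Finset.sum_congr rfl fun j hj => ?_
    rw [if_pos hlt, apply_ite φ, apply_ite C, map_zero, map_zero, coeff_map]
  · rw [if_neg hlt]
    have := row_sum (g.map φ) g.natDegree ((i : ℕ) - g.natDegree) (g.natDegree + f.natDegree)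
      g.natDegree_map_le (by omega)
    rw [← this]
    refine Finset.sum_congr rfl fun j hj => ?_
    rw [if_neg hlt, apply_ite φ, apply_ite C, map_zero, map_zero, coeff_map]

lemma exists_res_eq (f g : Polynomial ℤ) (hf : 0 < f.natDegree) (hg : 0 < g.natDegree) :
    ∃ U V : Polynomial ℤ, U * f + V * g = C (res f g) := by
  set m := g.natDegree with hm
  set n := f.natDegree with hn
  set N := m + n with hN
  let A : Matrix (Fin N) (Fin N) (Polynomial ℤ) :=
    (sylvesterMatrix f g).map (C : ℤ → Polynomial ℤ)
  let w : Fin N → Polynomial ℤ := fun j => X ^ (N - 1 - (j : ℕ))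
  have hNpos : 0 < N := by omega
  let last : Fin N := ⟨N - 1, by omega⟩
  have hrow : ∀ i : Fin N, A.mulVec w i =
      if (i : ℕ) < m then X ^ (N - 1 - (i : ℕ) - n) * f
      else X ^ (N - 1 - ((i : ℕ) - m) - m) * g := by
    intro i
    have := sylvester_row (RingHom.id ℤ) f g hf hg i
    simp only [RingHom.id_apply, Polynomial.map_id] at this
    exact this
  have key : A.adjugate.mulVec (A.mulVec w) last = C (res f g) := by
    rw [Matrix.mulVec_mulVec, Matrix.adjugate_mul, Matrix.smul_mulVec,
      Matrix.one_mulVec]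
    have hdet : A.det = C (res f g) := ((C : ℤ →+* Polynomial ℤ).map_det _).symm
    have hw : w last = 1 := by
      show X ^ (N - 1 - (N - 1)) = 1
      rw [Nat.sub_self, pow_zero]
    simp only [Pi.smul_apply, hw, smul_eq_mul, mul_one, hdet]
  refine ⟨∑ i : Fin N, A.adjugate last i *
      (if (i : ℕ) < m then X ^ (N - 1 - (i : ℕ) - n) else 0),
    ∑ i : Fin N, A.adjugate last i *
      (if (i : ℕ) < m then 0 else X ^ (N - 1 - ((i : ℕ) - m) - m)), ?_⟩
  rw [← key]
  have : A.adjugate.mulVec (A.mulVec w) last =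
      ∑ i : Fin N, A.adjugate last i * (A.mulVec w i) := rfl
  rw [this, Finset.sum_mul, Finset.sum_mul, ← Finset.sum_add_distrib]
  refine Finset.sum_congr rfl fun i _ => ?_
  rw [hrow i]
  by_cases hlt : (i : ℕ) < m
  · simp only [if_pos hlt]; ring
  · simp only [if_neg hlt]; ring

lemma r_dvd_of_mem (f g : Polynomial ℤ) (r : ℤ) (hrpos : 0 < r)
    (hrmem : ∃ u v : Polynomial ℤ, u * f + v * g = Polynomial.C r)
    (hrmin : ∀ s : ℤ, 0 < s →
      (∃ u v : Polynomial ℤ, u * f + v * g = Polynomial.C s) → r ≤ s)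
    (s : ℤ) (hs : ∃ u v : Polynomial ℤ, u * f + v * g = Polynomial.C s) :
    r ∣ s := by
  obtain ⟨u, v, huv⟩ := hrmem
  obtain ⟨u', v', hs'⟩ := hs
  have hmem : ∃ a b : Polynomial ℤ, a * f + b * g = Polynomial.C (s % r) :=
    ⟨u' - C (s / r) * u, v' - C (s / r) * v, by
      have : (C (s % r) : Polynomial ℤ) = C s - C (s / r) * C r := by
        rw [← C_mul, ← C_sub]
        congr 1
        rw [Int.emod_def]
        ring
      rw [this, ← hs', ← huv]
      ring⟩
  rcases eq_or_lt_of_le (Int.emod_nonneg s (ne_of_gt hrpos)) with h0 | hpos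
  · exact Int.dvd_of_emod_eq_zero h0.symm
  · have := hrmin (s % r) hpos hmem
    have := Int.emod_lt_of_pos s hrpos
    omega

lemma key_lemma (f g : Polynomial ℤ) (hf : 0 < f.natDegree) (hg : 0 < g.natDegree)
    (p : ℕ) (hp : p.Prime) (r : ℤ) (u v : Polynomial ℤ) (huv : u * f + v * g = C r)
    (hpr : ¬ (p : ℤ) ∣ r)
    (hL : ¬ (p : ℤ) ∣ f.leadingCoeff ∨ ¬ (p : ℤ) ∣ g.leadingCoeff) :
    ¬ (p : ℤ) ∣ res f g := by
  intro hdvd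
  haveI := Fact.mk hp
  set m := g.natDegree with hm
  set n := f.natDegree with hn
  set N := m + n with hN
  let φ : ℤ →+* ZMod p := Int.castRingHom (ZMod p)
  set B : Matrix (Fin N) (Fin N) (ZMod p) := (sylvesterMatrix f g).map φ with hB
  have hdetB : B.det = 0 := by
    have h0 : φ (res f g) = 0 := by
      have : ((res f g : ℤ) : ZMod p) = 0 := (ZMod.intCast_zmod_eq_zero_iff_dvd _ _).2 hdvd
      exact this
    rw [hB]
    exact (φ.map_det _).symm.trans h0
  obtain ⟨c, hc0, hcB⟩ := Matrix.exists_vecMul_eq_zero_iff.mpr hdetB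
  set fb := f.map φ with hfb
  set gb := g.map φ with hgb
  set U : Polynomial (ZMod p) :=
    ∑ i : Fin N, if (i : ℕ) < m then C (c i) * X ^ (N - 1 - (i : ℕ) - n) else 0 with hU
  set V : Polynomial (ZMod p) :=
    ∑ i : Fin N, if (i : ℕ) < m then 0 else C (c i) * X ^ (N - 1 - ((i : ℕ) - m) - m) with hV
  have main : U * fb + V * gb = 0 := by
    have h1 : U * fb + V * gb = ∑ i : Fin N, C (c i) *
        (if (i : ℕ) < m then X ^ (N - 1 - (i : ℕ) - n) * fb
         else X ^ (N - 1 - ((i : ℕ) - m) - m) * gb) := by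
      rw [hU, hV, Finset.sum_mul, Finset.sum_mul, ← Finset.sum_add_distrib]
      refine Finset.sum_congr rfl fun i _ => ?_
      by_cases hlt : (i : ℕ) < m
      · simp only [if_pos hlt]; ring
      · simp only [if_neg hlt]; ring
    rw [h1]
    have h2 : ∀ i : Fin N, (if (i : ℕ) < m then X ^ (N - 1 - (i : ℕ) - n) * fb
         else X ^ (N - 1 - ((i : ℕ) - m) - m) * gb)
        = ∑ j : Fin N, C (φ (sylvesterMatrix f g i j)) * X ^ (N - 1 - (j : ℕ)) :=
      fun i => (sylvester_row φ f g hf hg i).symm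
    calc ∑ i : Fin N, C (c i) *
        (if (i : ℕ) < m then X ^ (N - 1 - (i : ℕ) - n) * fb
         else X ^ (N - 1 - ((i : ℕ) - m) - m) * gb)
        = ∑ i : Fin N, ∑ j : Fin N,
            C (c i) * C (φ (sylvesterMatrix f g i j)) * X ^ (N - 1 - (j : ℕ)) := by
          refine Finset.sum_congr rfl fun i _ => ?_
          rw [h2 i, Finset.mul_sum]
          refine Finset.sum_congr rfl fun j _ => ?_
          ring
      _ = ∑ j : Fin N, (∑ i : Fin N,
            C (c i) * C (φ (sylvesterMatrix f g i j))) * X ^ (N - 1 - (j : ℕ)) := by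
          rw [Finset.sum_comm]
          exact Finset.sum_congr rfl fun j _ => (Finset.sum_mul _ _ _).symm
      _ = 0 := by
          refine Finset.sum_eq_zero fun j _ => ?_
          have : ∑ i : Fin N, C (c i) * C (φ (sylvesterMatrix f g i j))
              = C (Matrix.vecMul c B j) := by
            rw [Matrix.vecMul, dotProduct, map_sum]
            refine Finset.sum_congr rfl fun i _ => ?_
            rw [map_mul, hB, Matrix.map_apply]
          rw [this, hcB]
          simp
  have hUc : ∀ i : Fin N, (i : ℕ) < m → U.coeff (N - 1 - (i : ℕ) - n) = c i := by
    intro i0 hi0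
    rw [hU, finset_sum_coeff, Finset.sum_eq_single i0]
    · rw [if_pos hi0, coeff_C_mul, coeff_X_pow, if_pos rfl, mul_one]
    · intro i _ hne
      by_cases hlt : (i : ℕ) < m
      · rw [if_pos hlt, coeff_C_mul, coeff_X_pow, if_neg, mul_zero]
        intro hcontra
        have hi := i.isLt
        have hi0' := i0.isLt
        exact hne (Fin.ext (by omega))
      · rw [if_neg hlt, coeff_zero]
    · intro h; exact absurd (Finset.mem_univ i0) h
  have hVc : ∀ i : Fin N, ¬ (i : ℕ) < m → V.coeff (N - 1 - ((i : ℕ) - m) - m) = c i := by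
    intro i0 hi0
    rw [hV, finset_sum_coeff, Finset.sum_eq_single i0]
    · rw [if_neg hi0, coeff_C_mul, coeff_X_pow, if_pos rfl, mul_one]
    · intro i _ hne
      by_cases hlt : (i : ℕ) < m
      · rw [if_pos hlt, coeff_zero]
      · rw [if_neg hlt, coeff_C_mul, coeff_X_pow, if_neg, mul_zero]
        intro hcontra
        have hi := i.isLt
        have hi0' := i0.isLt
        exact hne (Fin.ext (by omega))
    · intro h; exact absurd (Finset.mem_univ i0) h
  have hcop : IsCoprime fb gb := by
    have hmap : (u.map φ) * fb + (v.map φ) * gb = C (φ r) := by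
      rw [hfb, hgb, ← Polynomial.map_mul, ← Polynomial.map_mul, ← Polynomial.map_add, huv,
        Polynomial.map_C]
    have hr0 : φ r ≠ 0 := fun h => hpr ((ZMod.intCast_zmod_eq_zero_iff_dvd _ _).1 h)
    refine ⟨C ((φ r)⁻¹) * u.map φ, C ((φ r)⁻¹) * v.map φ, ?_⟩
    have : (C ((φ r)⁻¹) * u.map φ) * fb + (C ((φ r)⁻¹) * v.map φ) * gb
        = C ((φ r)⁻¹) * ((u.map φ) * fb + (v.map φ) * gb) := by ring
    rw [this, hmap, ← C_mul, inv_mul_cancel₀ hr0, C_1]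
  have hUdeg : U.natDegree ≤ m - 1 := by
    rw [hU]
    refine Polynomial.natDegree_sum_le_of_forall_le _ _ fun i _ => ?_
    by_cases hlt : (i : ℕ) < m
    · rw [if_pos hlt]
      refine (Polynomial.natDegree_C_mul_le _ _).trans ?_
      rw [natDegree_X_pow]
      omega
    · rw [if_neg hlt, natDegree_zero]
      exact Nat.zero_le _
  have hVdeg : V.natDegree ≤ n - 1 := by
    rw [hV]
    refine Polynomial.natDegree_sum_le_of_forall_le _ _ fun i _ => ?_
    by_cases hlt : (i : ℕ) < m
    · rw [if_pos hlt, natDegree_zero]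
      exact Nat.zero_le _
    · rw [if_neg hlt]
      refine (Polynomial.natDegree_C_mul_le _ _).trans ?_
      rw [natDegree_X_pow]
      omega
  have final : U = 0 → V = 0 → False := by
    intro hU0 hV0
    apply hc0
    funext i
    by_cases hlt : (i : ℕ) < m
    · have := hUc i hlt
      rw [hU0, coeff_zero] at this
      exact this.symm
    · have := hVc i hlt
      rw [hV0, coeff_zero] at this
      exact this.symm
  rcases hL with hLf | hLg
  · have hcoefffb : fb.coeff n ≠ 0 := by
      rw [hfb, coeff_map]
      intro h
      apply hLf
      have hl : f.leadingCoeff = f.coeff n := by rw [Polynomial.leadingCoeff, ← hn]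
      rw [hl]
      exact (ZMod.intCast_zmod_eq_zero_iff_dvd _ _).1 h
    have hfb0 : fb ≠ 0 := fun h => hcoefffb (by rw [h, coeff_zero])
    have hdvdV : fb ∣ V := by
      refine hcop.dvd_of_dvd_mul_right ⟨-U, ?_⟩
      linear_combination main
    have hV0 : V = 0 := by
      by_contra hV0
      have h1 := Polynomial.natDegree_le_of_dvd hdvdV hV0
      have h2 := Polynomial.le_natDegree_of_ne_zero hcoefffb
      omega
    have hU0 : U = 0 := by
      have hz : U * fb = 0 := by
        rw [hV0, zero_mul, add_zero] at main
        exact main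
      rcases mul_eq_zero.1 hz with h | h
      · exact h
      · exact absurd h hfb0
    exact final hU0 hV0
  · have hcoeffgb : gb.coeff m ≠ 0 := by
      rw [hgb, coeff_map]
      intro h
      apply hLg
      have hl : g.leadingCoeff = g.coeff m := by rw [Polynomial.leadingCoeff, ← hm]
      rw [hl]
      exact (ZMod.intCast_zmod_eq_zero_iff_dvd _ _).1 h
    have hgb0 : gb ≠ 0 := fun h => hcoeffgb (by rw [h, coeff_zero])
    have hdvdU : gb ∣ U := by
      refine hcop.symm.dvd_of_dvd_mul_right ⟨-V, ?_⟩
      linear_combination main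
    have hU0 : U = 0 := by
      by_contra hU0
      have h1 := Polynomial.natDegree_le_of_dvd hdvdU hU0
      have h2 := Polynomial.le_natDegree_of_ne_zero hcoeffgb
      omega
    have hV0 : V = 0 := by
      have hz : V * gb = 0 := by
        rw [hU0, zero_mul, zero_add] at main
        exact main
      rcases mul_eq_zero.1 hz with h | h
      · exact h
      · exact absurd h hgb0
    exact final hU0 hV0

lemma dvd_res_of_dvd_lead (f g : Polynomial ℤ) (hf : 0 < f.natDegree) (hg : 0 < g.natDegree)
    (p : ℕ) (hp : p.Prime) (hLf : (p : ℤ) ∣ f.leadingCoeff) (hLg : (p : ℤ) ∣ g.leadingCoeff) :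
    (p : ℤ) ∣ res f g := by
  haveI := Fact.mk hp
  set m := g.natDegree with hm
  set n := f.natDegree with hn
  let φ : ℤ →+* ZMod p := Int.castRingHom (ZMod p)
  have hdetB : ((sylvesterMatrix f g).map φ).det = 0 := by
    apply Matrix.det_eq_zero_of_column_eq_zero ⟨0, by omega⟩
    intro i
    rw [Matrix.map_apply]
    have h0 : ((⟨0, by omega⟩ : Fin (m + n)) : ℕ) = 0 := rfl
    simp only [sylvesterMatrix, Matrix.of_apply, h0]
    by_cases hlt : (i : ℕ) < m
    · rw [if_pos hlt]
      by_cases hi0 : (i : ℕ) = 0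
      · rw [if_pos (by omega), hi0]
        have : f.natDegree + 0 - 0 = f.natDegree := by omega
        rw [this]
        exact (ZMod.intCast_zmod_eq_zero_iff_dvd _ _).2 hLf
      · rw [if_neg (by omega), map_zero]
    · rw [if_neg hlt]
      by_cases hi0 : (i : ℕ) = m
      · rw [if_pos (by omega), hi0]
        have : g.natDegree + (m - m) - 0 = g.natDegree := by omega
        rw [this]
        exact (ZMod.intCast_zmod_eq_zero_iff_dvd _ _).2 hLg
      · rw [if_neg (by omega), map_zero]
  rw [← ZMod.intCast_zmod_eq_zero_iff_dvd]
  calc ((res f g : ℤ) : ZMod p) = φ ((sylvesterMatrix f g).det) := rfl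
    _ = ((sylvesterMatrix f g).map φ).det := φ.map_det _
    _ = 0 := hdetB

theorem statement_12 (f g : Polynomial ℤ)
    (hf : 0 < f.natDegree) (hg : 0 < g.natDegree)
    (hcop : IsCoprime (f.map (Int.castRingHom ℚ)) (g.map (Int.castRingHom ℚ)))
    (r : ℤ) (hrpos : 0 < r)
    (hrmem : ∃ u v : Polynomial ℤ, u * f + v * g = Polynomial.C r)
    (hrmin : ∀ s : ℤ, 0 < s →
      (∃ u v : Polynomial ℤ, u * f + v * g = Polynomial.C s) → r ≤ s) :
    ∀ p : ℕ, p.Prime →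
      ((p : ℤ) ∣ |res f g| ↔ (p : ℤ) ∣ (Int.gcd f.leadingCoeff g.leadingCoeff : ℤ) * r) := by
  intro p hp
  have hpI : Prime (p : ℤ) := Nat.prime_iff_prime_int.mp hp
  have hrres : r ∣ res f g := r_dvd_of_mem f g r hrpos hrmem hrmin _ (exists_res_eq f g hf hg)
  constructor
  · intro hdvd
    have hdres : (p : ℤ) ∣ res f g := (dvd_abs _ _).1 hdvd
    by_contra hnd
    rw [hpI.dvd_mul] at hnd
    push_neg at hnd
    obtain ⟨hnd1, hnd2⟩ := hnd
    have hL : ¬ (p : ℤ) ∣ f.leadingCoeff ∨ ¬ (p : ℤ) ∣ g.leadingCoeff := by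
      by_contra hc
      push_neg at hc
      exact hnd1 (Int.dvd_coe_gcd hc.1 hc.2)
    obtain ⟨u, v, huv⟩ := hrmem
    exact key_lemma f g hf hg p hp r u v huv hnd2 hL hdres
  · intro hdvd
    rw [dvd_abs]
    rcases hpI.dvd_mul.1 hdvd with hd | hr'
    · exact dvd_res_of_dvd_lead f g hf hg p hp (hd.trans (Int.gcd_dvd_left _ _))
        (hd.trans (Int.gcd_dvd_right _ _))
    · exact hr'.trans hrres
end

section
/- Let f and g be coprime integer polynomials of positive degree with gcd(L(f), L(g)) > 1. Then B(f,g) ≠ |Res(f,g)| and r(f,g) ≠ |Res(f,g)|. -/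
open Polynomial

namespace St14

open Matrix Finset

lemma aux_sum (p : Polynomial ℤ) (a b N : ℕ) (hp : p.natDegree ≤ b) (hN : a + b < N) :
    ∑ jj ∈ Finset.range N,
      (if a ≤ jj ∧ jj ≤ a + b then Polynomial.C (p.coeff (b + a - jj)) * X ^ (N - 1 - jj) else 0)
    = X ^ (N - 1 - (a + b)) * p := by
  rw [← Finset.sum_filter]
  have hfil : (Finset.range N).filter (fun jj => a ≤ jj ∧ jj ≤ a + b)
      = Finset.Icc a (a + b) := by
    ext jj
    simp only [Finset.mem_filter, Finset.mem_range, Finset.mem_Icc]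
    omega
  rw [hfil]
  rw [Finset.sum_nbij' (i := fun jj => a + b - jj) (j := fun k => a + b - k)
      (t := Finset.range (b + 1))
      (g := fun k => Polynomial.C (p.coeff k) * X ^ ((N - 1 - (a + b)) + k))
      (fun x hx => by simp only [Finset.mem_Icc] at hx; simp only [Finset.mem_range]; omega)
      (fun x hx => by simp only [Finset.mem_range] at hx; simp only [Finset.mem_Icc]; omega)
      (fun x hx => by
        simp only [Finset.mem_Icc] at hx; show a + b - (a + b - x) = x; omega)
      (fun x hx => by
        simp only [Finset.mem_range] at hx; show a + b - (a + b - x) = x; omega)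
      (fun x hx => by
        simp only [Finset.mem_Icc] at hx
        have h1 : b + a - x = a + b - x := by omega
        have h2 : N - 1 - x = (N - 1 - (a + b)) + (a + b - x) := by omega
        rw [h1, h2])]
  conv_rhs => rw [p.as_sum_range' (b + 1) (by omega)]
  rw [Finset.mul_sum]
  refine Finset.sum_congr rfl fun k _ => ?_
  rw [← Polynomial.C_mul_X_pow_eq_monomial, pow_add]
  ring

lemma mulVec_eq (f g : Polynomial ℤ) (i : Fin (g.natDegree + f.natDegree)) :
    (((sylvesterMatrix f g).map (Polynomial.C : ℤ →+* Polynomial ℤ)).mulVec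
      (fun j => (X : Polynomial ℤ) ^ (g.natDegree + f.natDegree - 1 - (j : ℕ)))) i =
    if (i : ℕ) < g.natDegree then X ^ (g.natDegree - 1 - (i : ℕ)) * f
    else X ^ (f.natDegree - 1 - ((i : ℕ) - g.natDegree)) * g := by
  have hi := i.isLt
  rw [Matrix.mulVec, dotProduct]
  by_cases him : (i : ℕ) < g.natDegree
  · rw [if_pos him]
    have key : ∀ j : Fin (g.natDegree + f.natDegree),
        ((sylvesterMatrix f g).map (Polynomial.C : ℤ →+* Polynomial ℤ)) i j *
          X ^ (g.natDegree + f.natDegree - 1 - (j : ℕ)) =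
        (fun jj : ℕ => if (i:ℕ) ≤ jj ∧ jj ≤ (i:ℕ) + f.natDegree then
          Polynomial.C (f.coeff (f.natDegree + (i:ℕ) - jj)) *
            X ^ (g.natDegree + f.natDegree - 1 - jj) else 0) (j : ℕ) := by
      intro j
      simp only [Matrix.map_apply, sylvesterMatrix, Matrix.of_apply, if_pos him]
      split_ifs with h
      · rfl
      · simp
    rw [Finset.sum_congr rfl (fun j _ => key j),
      Fin.sum_univ_eq_sum_range (fun jj : ℕ => if (i:ℕ) ≤ jj ∧ jj ≤ (i:ℕ) + f.natDegree then
          Polynomial.C (f.coeff (f.natDegree + (i:ℕ) - jj)) *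
            X ^ (g.natDegree + f.natDegree - 1 - jj) else 0) (g.natDegree + f.natDegree),
      aux_sum f (i:ℕ) f.natDegree _ le_rfl (by omega)]
    congr 1
    congr 1
    omega
  · rw [if_neg him]
    have key : ∀ j : Fin (g.natDegree + f.natDegree),
        ((sylvesterMatrix f g).map (Polynomial.C : ℤ →+* Polynomial ℤ)) i j *
          X ^ (g.natDegree + f.natDegree - 1 - (j : ℕ)) =
        (fun jj : ℕ => if (i:ℕ) - g.natDegree ≤ jj ∧ jj ≤ ((i:ℕ) - g.natDegree) + g.natDegree then
          Polynomial.C (g.coeff (g.natDegree + ((i:ℕ) - g.natDegree) - jj)) *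
            X ^ (g.natDegree + f.natDegree - 1 - jj) else 0) (j : ℕ) := by
      intro j
      simp only [Matrix.map_apply, sylvesterMatrix, Matrix.of_apply, if_neg him]
      split_ifs with h
      · rfl
      · simp
    rw [Finset.sum_congr rfl (fun j _ => key j),
      Fin.sum_univ_eq_sum_range (fun jj : ℕ => if (i:ℕ) - g.natDegree ≤ jj ∧
          jj ≤ ((i:ℕ) - g.natDegree) + g.natDegree then
          Polynomial.C (g.coeff (g.natDegree + ((i:ℕ) - g.natDegree) - jj)) *
            X ^ (g.natDegree + f.natDegree - 1 - jj) else 0) (g.natDegree + f.natDegree),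
      aux_sum g ((i:ℕ) - g.natDegree) g.natDegree _ le_rfl (by omega)]
    congr 1
    congr 1
    omega

lemma degree_C_mul_le' (c : ℚ) (t : Polynomial ℚ) :
    (Polynomial.C c * t).degree ≤ t.degree := by
  rcases eq_or_ne c 0 with rfl | hc
  · simp
  · rw [Polynomial.degree_C_mul hc]

lemma key (f g : Polynomial ℤ) (hf : 0 < f.natDegree) (hg : 0 < g.natDegree)
    (d : ℤ) (hdf : d ∣ f.leadingCoeff) (hdg : d ∣ g.leadingCoeff) (hd0 : d ≠ 0) :
    ∃ (R' : ℤ) (u v : Polynomial ℤ),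
      res f g = d * R' ∧
      u.degree < (g.natDegree : WithBot ℕ) ∧ v.degree < (f.natDegree : WithBot ℕ) ∧
      u * f + v * g = Polynomial.C R' := by
  classical
  set S := sylvesterMatrix f g with hS
  set z : Fin (g.natDegree + f.natDegree) := ⟨0, by omega⟩ with hz
  set last : Fin (g.natDegree + f.natDegree) :=
    ⟨g.natDegree + f.natDegree - 1, by omega⟩ with hlast
  have hzlast : z ≠ last := by
    simp only [hz, hlast, Ne, Fin.mk.injEq]
    omega
  have hdvd : ∀ i, d ∣ S i z := by
    intro i
    have hiz : ((z : Fin (g.natDegree + f.natDegree)) : ℕ) = 0 := rfl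
    by_cases him : (i : ℕ) < g.natDegree
    · by_cases hi0 : (i : ℕ) = 0
      · have hiz2 : i = z := Fin.ext hi0
        have he : S i z = f.coeff f.natDegree := by
          rw [hiz2]
          simp only [hS, sylvesterMatrix, Matrix.of_apply, hiz]
          rw [if_pos hg, if_pos (by omega)]
          norm_num
        rw [he, Polynomial.coeff_natDegree]
        exact hdf
      · have he : S i z = 0 := by
          simp only [hS, sylvesterMatrix, Matrix.of_apply, hiz, if_pos him]
          rw [if_neg]
          omega
        simp [he]
    · by_cases hi0 : (i : ℕ) = g.natDegree
      · have he : S i z = g.coeff g.natDegree := by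
          simp only [hS, sylvesterMatrix, Matrix.of_apply, hiz]
          rw [if_neg him, if_pos (by omega)]
          rw [show g.natDegree + ((i:ℕ) - g.natDegree) - 0 = g.natDegree by omega]
        rw [he, Polynomial.coeff_natDegree]
        exact hdg
      · have he : S i z = 0 := by
          simp only [hS, sylvesterMatrix, Matrix.of_apply, hiz, if_neg him]
          rw [if_neg]
          omega
        simp [he]
  set S' : Matrix (Fin (g.natDegree + f.natDegree)) (Fin (g.natDegree + f.natDegree)) ℤ :=
    Matrix.of (fun i j => if j = z then S i j / d else S i j) with hS'
  set D : Matrix (Fin (g.natDegree + f.natDegree)) (Fin (g.natDegree + f.natDegree)) ℤ :=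
    Matrix.diagonal (fun j => if j = z then d else 1) with hD
  have hfac : S = S' * D := by
    ext i j
    rw [hD, Matrix.mul_diagonal]
    by_cases hj : j = z
    · subst hj
      simp only [hS', Matrix.of_apply, if_pos rfl]
      exact (Int.ediv_mul_cancel (hdvd i)).symm
    · simp [hS', Matrix.of_apply, hj]
  have hdetD : D.det = d := by
    rw [hD, Matrix.det_diagonal, Finset.prod_ite_eq' Finset.univ z (fun _ => d)]
    simp
  have hdet : res f g = d * S'.det := by
    rw [res, ← hS, hfac, Matrix.det_mul, hdetD]
    ring
  have hadj : ∀ i, S.adjugate last i = d * S'.adjugate last i := by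
    intro i
    rw [hfac, Matrix.adjugate_mul_distrib, hD, Matrix.adjugate_diagonal, Matrix.diagonal_mul]
    congr 1
    rw [Finset.prod_ite_eq' (Finset.univ.erase last) z (fun _ => d)]
    rw [if_pos (Finset.mem_erase.mpr ⟨hzlast, Finset.mem_univ z⟩)]
  -- the grand adjugate identity
  set w : Fin (g.natDegree + f.natDegree) → Polynomial ℤ :=
    fun j => (X : Polynomial ℤ) ^ (g.natDegree + f.natDegree - 1 - (j : ℕ)) with hw
  set T := S.map (Polynomial.C : ℤ →+* Polynomial ℤ) with hT
  have hdetmap : T.det = Polynomial.C S.det := by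
    rw [hT, ← RingHom.mapMatrix_apply, ← RingHom.map_det]
  have hadjmap : T.adjugate = (S.adjugate).map (Polynomial.C : ℤ →+* Polynomial ℤ) := by
    rw [hT, ← RingHom.mapMatrix_apply, ← RingHom.map_adjugate, RingHom.mapMatrix_apply]
  have hgrand : T.adjugate.mulVec (T.mulVec w) = (Polynomial.C (res f g)) • w := by
    rw [Matrix.mulVec_mulVec, Matrix.adjugate_mul, hdetmap, res, ← hS,
      Matrix.smul_mulVec, Matrix.one_mulVec]
  have hrow := congrFun hgrand last
  rw [Matrix.mulVec, dotProduct] at hrow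
  have hterm : ∀ i, T.adjugate last i * T.mulVec w i =
      Polynomial.C d * (Polynomial.C (S'.adjugate last i) *
        (if (i : ℕ) < g.natDegree then X ^ (g.natDegree - 1 - (i : ℕ)) * f
         else X ^ (f.natDegree - 1 - ((i : ℕ) - g.natDegree)) * g)) := by
    intro i
    rw [hadjmap, Matrix.map_apply, hadj i, Polynomial.C_mul, hT, hw, mulVec_eq f g i, mul_assoc]
  rw [Finset.sum_congr rfl (fun i _ => hterm i), ← Finset.mul_sum] at hrow
  have hwlast : w last = 1 := by
    rw [hw]
    simp only [hlast]
    rw [Nat.sub_self, pow_zero]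
  rw [Pi.smul_apply, hwlast, smul_eq_mul, mul_one, hdet, Polynomial.C_mul] at hrow
  have hsum : ∑ i, Polynomial.C (S'.adjugate last i) *
      (if (i : ℕ) < g.natDegree then X ^ (g.natDegree - 1 - (i : ℕ)) * f
       else X ^ (f.natDegree - 1 - ((i : ℕ) - g.natDegree)) * g) = Polynomial.C S'.det :=
    mul_left_cancel₀ (by simpa using hd0) hrow
  -- split the sum
  set u : Polynomial ℤ :=
    ∑ i ∈ Finset.univ.filter (fun i : Fin (g.natDegree + f.natDegree) => (i:ℕ) < g.natDegree),
      Polynomial.C (S'.adjugate last i) * X ^ (g.natDegree - 1 - (i:ℕ)) with hu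
  set v : Polynomial ℤ :=
    ∑ i ∈ Finset.univ.filter (fun i : Fin (g.natDegree + f.natDegree) => ¬ (i:ℕ) < g.natDegree),
      Polynomial.C (S'.adjugate last i) * X ^ (f.natDegree - 1 - ((i:ℕ) - g.natDegree)) with hv
  refine ⟨S'.det, u, v, hdet, ?_, ?_, ?_⟩
  · refine lt_of_le_of_lt (Polynomial.degree_sum_le _ _) ?_
    rw [Finset.sup_lt_iff (by exact_mod_cast WithBot.bot_lt_coe g.natDegree)]
    intro i hi
    refine lt_of_le_of_lt (Polynomial.degree_C_mul_X_pow_le _ _) ?_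
    exact_mod_cast (show g.natDegree - 1 - (i:ℕ) < g.natDegree by omega)
  · refine lt_of_le_of_lt (Polynomial.degree_sum_le _ _) ?_
    rw [Finset.sup_lt_iff (by exact_mod_cast WithBot.bot_lt_coe f.natDegree)]
    intro i hi
    refine lt_of_le_of_lt (Polynomial.degree_C_mul_X_pow_le _ _) ?_
    exact_mod_cast (show f.natDegree - 1 - ((i:ℕ) - g.natDegree) < f.natDegree by omega)
  · rw [← hsum, hu, hv, Finset.sum_mul, Finset.sum_mul]
    rw [Finset.sum_congr rfl (fun (i : Fin (g.natDegree + f.natDegree)) _ =>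
      mul_ite ((i:ℕ) < g.natDegree) (Polynomial.C (S'.adjugate last i))
        (X ^ (g.natDegree - 1 - (i:ℕ)) * f)
        (X ^ (f.natDegree - 1 - ((i:ℕ) - g.natDegree)) * g)), Finset.sum_ite]
    refine congrArg₂ (· + ·) ?_ ?_
    · exact Finset.sum_congr rfl fun i _ => by ring
    · exact Finset.sum_congr rfl fun i _ => by ring

end St14

theorem statement_14 (f g : Polynomial ℤ)
    (hf : 0 < f.natDegree) (hg : 0 < g.natDegree)
    (hcop : IsCoprime (f.map (Int.castRingHom ℚ)) (g.map (Int.castRingHom ℚ)))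
    (r : ℤ) (hrpos : 0 < r)
    (hrmem : ∃ u v : Polynomial ℤ, u * f + v * g = Polynomial.C r)
    (hrmin : ∀ s : ℤ, 0 < s →
      (∃ u v : Polynomial ℤ, u * f + v * g = Polynomial.C s) → r ≤ s)
    (B : ℤ) (hB : IsBezoutDenom f g B)
    (hBmin : ∀ B' : ℤ, IsBezoutDenom f g B' → B ≤ B')
    (hd : 1 < Int.gcd f.leadingCoeff g.leadingCoeff) :
    B ≠ |res f g| ∧ r ≠ |res f g| := by
  set d : ℤ := (Int.gcd f.leadingCoeff g.leadingCoeff : ℤ) with hdd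
  have hd1 : (1 : ℤ) < d := by rw [hdd]; exact_mod_cast hd
  obtain ⟨R', u, v, hres, hdu, hdv, heq⟩ :=
    St14.key f g hf hg d (Int.gcd_dvd_left _ _) (Int.gcd_dvd_right _ _) (by omega)
  by_cases hR0 : R' = 0
  · have : res f g = 0 := by rw [hres, hR0, mul_zero]
    rw [this, abs_zero]
    exact ⟨by have := hB.1; omega, by omega⟩
  -- sign normalize
  · have hinj : Function.Injective (Int.castRingHom ℚ) := fun a b h =>
      Int.cast_injective h
    set R2 : ℤ := |R'| with hR2
    set u2 : Polynomial ℤ := if 0 ≤ R' then u else -u with hu2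
    set v2 : Polynomial ℤ := if 0 ≤ R' then v else -v with hv2
    have hR2pos : 0 < R2 := abs_pos.mpr hR0
    have heq2 : u2 * f + v2 * g = Polynomial.C R2 := by
      by_cases h : 0 ≤ R'
      · rw [hu2, hv2, if_pos h, if_pos h, heq, hR2, abs_of_nonneg h]
      · rw [hu2, hv2, if_neg h, if_neg h, hR2, abs_of_neg (by omega)]
        rw [neg_mul, neg_mul, ← neg_add, heq, ← Polynomial.C_neg]
    have hdu2 : u2.degree < (g.natDegree : WithBot ℕ) := by
      by_cases h : 0 ≤ R' <;> simp [hu2, h, Polynomial.degree_neg, hdu]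
    have hdv2 : v2.degree < (f.natDegree : WithBot ℕ) := by
      by_cases h : 0 ≤ R' <;> simp [hv2, h, Polynomial.degree_neg, hdv]
    have habs : |res f g| = d * R2 := by
      rw [hres, abs_mul, abs_of_pos (by omega : (0:ℤ) < d), hR2]
    have hR2lt : R2 < |res f g| := by
      rw [habs]
      nlinarith
    constructor
    · -- B part
      have hBden : IsBezoutDenom f g R2 := by
        refine ⟨hR2pos, Polynomial.C ((R2 : ℚ)⁻¹) * u2.map (Int.castRingHom ℚ),
          Polynomial.C ((R2 : ℚ)⁻¹) * v2.map (Int.castRingHom ℚ), ?_, ?_, ?_, ?_, ?_⟩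
        · refine lt_of_le_of_lt (St14.degree_C_mul_le' _ _) ?_
          rw [Polynomial.degree_map_eq_of_injective hinj u2,
            Polynomial.degree_map_eq_of_injective hinj g]
          refine lt_of_lt_of_le hdu2 ?_
          rw [Polynomial.degree_eq_natDegree (by
            intro h0; rw [h0] at hg; simp at hg)]
        · refine lt_of_le_of_lt (St14.degree_C_mul_le' _ _) ?_
          rw [Polynomial.degree_map_eq_of_injective hinj v2,
            Polynomial.degree_map_eq_of_injective hinj f]
          refine lt_of_lt_of_le hdv2 ?_
          rw [Polynomial.degree_eq_natDegree (by
            intro h0; rw [h0] at hf; simp at hf)]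
        · have hR2Q : ((R2 : ℚ)) ≠ 0 := by exact_mod_cast hR2pos.ne'
          rw [mul_assoc, mul_assoc, ← mul_add, ← Polynomial.map_mul, ← Polynomial.map_mul,
            ← Polynomial.map_add, heq2]
          rw [Polynomial.map_C]
          rw [← Polynomial.C_mul]
          rw [show ((Int.castRingHom ℚ) R2 : ℚ) = (R2 : ℚ) by simp]
          rw [inv_mul_cancel₀ hR2Q, Polynomial.C_1]
        · refine ⟨u2, ?_⟩
          rw [← mul_assoc, ← Polynomial.C_mul, mul_inv_cancel₀
            (by exact_mod_cast hR2pos.ne' : ((R2:ℚ)) ≠ 0), Polynomial.C_1, one_mul]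
        · refine ⟨v2, ?_⟩
          rw [← mul_assoc, ← Polynomial.C_mul, mul_inv_cancel₀
            (by exact_mod_cast hR2pos.ne' : ((R2:ℚ)) ≠ 0), Polynomial.C_1, one_mul]
      have := hBmin R2 hBden
      omega
    · -- r part
      have := hrmin R2 hR2pos ⟨u2, v2, heq2⟩
      omega
end
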